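/- arXiv:1906.00656 — 2 statements merged into one kernel-verified Lean document; each statement's English description precedes it below -/
import Mathlib

section
/- Let (Ω, ℱ, ℙ) be a probability space and Z a nonnegative continuous semimartingale satisfying dZ_t = β_t dt + α_t √(Z_t) dB_t with Z₀ = z ≥ 0, where B is a Brownian motion, |β_t| ≤ λ and λ^{−1} ≤ |α_t|² ≤ λ for a constant λ ≥ 1. If z < 2, then for every s > 0, E[sup_{0 ≤ t ≤ s} |√(Z_{t∧τ}) − √z|²] ≤ λ s + C(λ)√s, where τ = inf{t : |√(Z_t) − √z| ≥ 1} and C(λ) depends only on λ. -/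
open MeasureTheory Real Set Filter Topology
open scoped ENNReal NNReal


lemma aux_sqrt_sq_le {a b : ℝ} (ha : 0 ≤ a) (hb : 0 ≤ b) :
    |Real.sqrt a - Real.sqrt b| ^ 2 ≤ |a - b| := by
  rcases le_total b a with h | h
  · have h1 : Real.sqrt b ≤ Real.sqrt a := Real.sqrt_le_sqrt h
    have h2 : Real.sqrt b * Real.sqrt b ≤ Real.sqrt a * Real.sqrt b := by
      nlinarith [Real.sqrt_nonneg a, Real.sqrt_nonneg b]
    have hb2 : Real.sqrt b * Real.sqrt b = b := Real.mul_self_sqrt hb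
    have ha2 : Real.sqrt a * Real.sqrt a = a := Real.mul_self_sqrt ha
    rw [abs_of_nonneg (by linarith), abs_of_nonneg (by linarith)]
    nlinarith
  · have h1 : Real.sqrt a ≤ Real.sqrt b := Real.sqrt_le_sqrt h
    have h2 : Real.sqrt a * Real.sqrt a ≤ Real.sqrt b * Real.sqrt a := by
      nlinarith [Real.sqrt_nonneg a, Real.sqrt_nonneg b]
    have hb2 : Real.sqrt b * Real.sqrt b = b := Real.mul_self_sqrt hb
    have ha2 : Real.sqrt a * Real.sqrt a = a := Real.mul_self_sqrt ha
    rw [abs_sub_comm, abs_sub_comm a b, abs_of_nonneg (by linarith), abs_of_nonneg (by linarith)]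
    nlinarith

lemma aux_clamp_lip (a b : ℝ) : |max 0 (min 1 a) - max 0 (min 1 b)| ≤ |a - b| := by
  have h1 : |max 0 (min 1 a) - max 0 (min 1 b)| ≤ |min 1 a - min 1 b| := by
    rw [max_comm 0 (min 1 a), max_comm 0 (min 1 b)]
    exact abs_max_sub_max_le_abs _ _ _
  refine h1.trans ?_
  rcases le_total a 1 with h | h <;> rcases le_total b 1 with h' | h' <;>
    simp [min_eq_left, min_eq_right, h, h'] <;> rw [abs_le] <;>
    constructor <;> cases' abs_le.mp (le_refl |a - b|) with hl hr <;> linarith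


lemma aux_riemann {g : ℝ → ℝ} (hg : Continuous g) {s : ℝ} (hs : 0 < s) :
    Tendsto (fun n : ℕ => (s / n) * ∑ k ∈ Finset.range n, g (k * s / n)) atTop
      (𝓝 (∫ u in (0:ℝ)..s, g u)) := by
  rw [Metric.tendsto_atTop]
  intro ε hε
  have hsc : UniformContinuousOn g (Icc 0 s) :=
    isCompact_Icc.uniformContinuousOn_of_continuous hg.continuousOn
  rw [Metric.uniformContinuousOn_iff] at hsc
  have hε' : 0 < ε / (2 * (s + 1)) := by positivity
  obtain ⟨δ, hδ, hδ'⟩ := hsc _ hε'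
  obtain ⟨N₀, hN₀⟩ := exists_nat_gt (s / δ)
  refine ⟨N₀ + 1, fun n hn => ?_⟩
  have hn1 : 1 ≤ n := le_trans (Nat.le_add_left 1 N₀) hn
  have hnpos : (0:ℝ) < n := by exact_mod_cast Nat.lt_of_lt_of_le Nat.zero_lt_one hn1
  have hsn : s / n < δ := by
    have h2 : s / δ < (n:ℝ) := lt_of_lt_of_le hN₀ (by exact_mod_cast le_trans (Nat.le_succ N₀) hn)
    rw [div_lt_iff₀ hnpos]
    rw [div_lt_iff₀ hδ] at h2
    linarith
  set a : ℕ → ℝ := fun k => k * s / n with ha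
  have hmem : ∀ k : ℕ, k ≤ n → a k ∈ Icc (0:ℝ) s := by
    intro k hk
    constructor
    · positivity
    · rw [ha]
      rw [div_le_iff₀ hnpos]
      have : (k:ℝ) ≤ n := by exact_mod_cast hk
      nlinarith
  have hstep : ∀ k : ℕ, a (k+1) - a k = s / n := by
    intro k
    simp only [ha]
    push_cast
    field_simp
    ring
  have hsum : ∫ u in (0:ℝ)..s, g u = ∑ k ∈ Finset.range n, ∫ u in a k..a (k+1), g u := by
    rw [intervalIntegral.sum_integral_adjacent_intervals
      (fun k _ => hg.intervalIntegrable _ _)]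
    have h0 : a 0 = 0 := by simp [ha]
    have hn' : a n = s := by rw [ha]; field_simp
    rw [h0, hn']
  have hconst : (s / n) * ∑ k ∈ Finset.range n, g (a k)
      = ∑ k ∈ Finset.range n, ∫ _ in a k..a (k+1), g (a k) := by
    rw [Finset.mul_sum]
    refine Finset.sum_congr rfl fun k _ => ?_
    rw [intervalIntegral.integral_const, hstep k, smul_eq_mul, mul_comm]
  have hkey : ∀ k ∈ Finset.range n,
      |(∫ _ in a k..a (k+1), g (a k)) - ∫ u in a k..a (k+1), g u| ≤ ε / (2 * (s + 1)) * (s / n) := by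
    intro k hk
    rw [Finset.mem_range] at hk
    rw [← intervalIntegral.integral_sub (intervalIntegrable_const) (hg.intervalIntegrable _ _)]
    have hle : a k ≤ a (k+1) := by
      have := hstep k
      have : 0 ≤ s / n := by positivity
      linarith [hstep k]
    have hbound : ∀ u ∈ Set.uIoc (a k) (a (k+1)), ‖g (a k) - g u‖ ≤ ε / (2 * (s + 1)) := by
      intro u hu
      rw [Set.uIoc_of_le hle] at hu
      have hak : a k ∈ Icc (0:ℝ) s := hmem k (le_of_lt hk)
      have hu' : u ∈ Icc (0:ℝ) s := by
        constructor
        · exact le_trans hak.1 (le_of_lt hu.1)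
        · exact le_trans hu.2 (hmem (k+1) hk).2
      have hdist : dist (a k) u < δ := by
        rw [Real.dist_eq, abs_sub_comm, abs_of_nonneg (by linarith [hu.1])]
        have : u - a k ≤ s / n := by linarith [hu.2, hstep k]
        linarith
      have := hδ' (a k) hak u hu' hdist
      rw [Real.dist_eq] at this
      rw [Real.norm_eq_abs]
      exact le_of_lt this
    have := intervalIntegral.norm_integral_le_of_norm_le_const hbound
    rw [Real.norm_eq_abs] at this
    refine this.trans ?_
    have : |a (k+1) - a k| = s / n := by rw [hstep k]; exact abs_of_nonneg (by positivity)
    rw [this]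
  rw [Real.dist_eq, hsum, hconst, ← Finset.sum_sub_distrib]
  calc |∑ k ∈ Finset.range n, ((∫ _ in a k..a (k+1), g (a k)) - ∫ u in a k..a (k+1), g u)|
      ≤ ∑ k ∈ Finset.range n, |(∫ _ in a k..a (k+1), g (a k)) - ∫ u in a k..a (k+1), g u| :=
        Finset.abs_sum_le_sum_abs _ _
    _ ≤ ∑ _k ∈ Finset.range n, ε / (2 * (s + 1)) * (s / n) := Finset.sum_le_sum hkey
    _ = n * (ε / (2 * (s + 1)) * (s / n)) := by rw [Finset.sum_const, Finset.card_range]; ring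
    _ = ε * s / (2 * (s + 1)) := by field_simp
    _ < ε := by rw [div_lt_iff₀ (by positivity)]; nlinarith


lemma aux_min_integrable {b : ℝ} (hb : 0 ≤ b) {c : ℝ} (hc : 0 ≤ c) (hc1 : c ≤ 1) :
    IntervalIntegrable (fun t : ℝ => min 1 (b / t ^ 2)) MeasureTheory.volume c 1 := by
  have hmeas : Measurable fun t : ℝ => min 1 (b / t ^ 2) :=
    measurable_const.min (measurable_const.div (measurable_id.pow_const 2))
  rw [intervalIntegrable_iff_integrableOn_Ioc_of_le hc1]
  refine Integrable.mono' (integrable_const 1) hmeas.aestronglyMeasurable ?_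
  refine Filter.Eventually.of_forall fun t => ?_
  rw [Real.norm_eq_abs, abs_le]
  constructor
  · have : (0:ℝ) ≤ min 1 (b / t ^ 2) := le_min one_pos.le (by positivity)
    linarith
  · exact min_le_left _ _

lemma aux_min_int {b : ℝ} (hb : 0 ≤ b) :
    (∫ t in Set.Ioc (0:ℝ) 1, min 1 (b / t ^ 2)) ≤ 2 * Real.sqrt b := by
  have hint0 : ∀ c : ℝ, 0 ≤ c → c ≤ 1 →
      IntervalIntegrable (fun t : ℝ => min 1 (b / t ^ 2)) MeasureTheory.volume c 1 :=
    fun c h1 h2 => aux_min_integrable hb h1 h2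
  have hioc : (∫ t in Set.Ioc (0:ℝ) 1, min 1 (b / t ^ 2))
      = ∫ t in (0:ℝ)..1, min 1 (b / t ^ 2) := by
    rw [intervalIntegral.integral_of_le (by norm_num : (0:ℝ) ≤ 1)]
  rw [hioc]
  rcases le_or_gt 1 b with hb1 | hb1
  · -- b ≥ 1 : bound by 1 ≤ 2 √b
    have h1 : (∫ t in (0:ℝ)..1, min 1 (b / t ^ 2)) ≤ ∫ t in (0:ℝ)..1, (1:ℝ) := by
      refine intervalIntegral.integral_mono_on (by norm_num) (hint0 0 le_rfl (by norm_num))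
        intervalIntegrable_const fun t _ => min_le_left _ _
    have h2 : (∫ t in (0:ℝ)..1, (1:ℝ)) = 1 := by simp
    have h3 : (1:ℝ) ≤ Real.sqrt b := by
      rw [show (1:ℝ) = Real.sqrt 1 by simp]
      exact Real.sqrt_le_sqrt hb1
    linarith
  · -- b < 1
    set c := Real.sqrt b with hcdef
    have hc0 : 0 ≤ c := Real.sqrt_nonneg b
    have hc1 : c ≤ 1 := by
      rw [hcdef, show (1:ℝ) = Real.sqrt 1 by simp]
      exact Real.sqrt_le_sqrt (le_of_lt hb1)
    have hcc : c ^ 2 = b := Real.sq_sqrt hb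
    have hsplit : (∫ t in (0:ℝ)..1, min 1 (b / t ^ 2))
        = (∫ t in (0:ℝ)..c, min 1 (b / t ^ 2)) + ∫ t in c..1, min 1 (b / t ^ 2) := by
      rw [intervalIntegral.integral_add_adjacent_intervals
        ((hint0 0 le_rfl (by norm_num)).mono_set ?_) (hint0 c hc0 hc1)]
      rw [Set.uIcc_of_le hc0, Set.uIcc_of_le (by norm_num : (0:ℝ) ≤ 1)]
      exact Set.Icc_subset_Icc le_rfl hc1
    rw [hsplit]
    have hpart1 : (∫ t in (0:ℝ)..c, min 1 (b / t ^ 2)) ≤ c := by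
      have := intervalIntegral.integral_mono_on hc0
        ((hint0 0 le_rfl (by norm_num)).mono_set
          (by rw [Set.uIcc_of_le hc0, Set.uIcc_of_le (by norm_num : (0:ℝ) ≤ 1)];
              exact Set.Icc_subset_Icc le_rfl hc1))
        intervalIntegrable_const (fun t _ => min_le_left 1 (b / t ^ 2))
      simpa using this
    rcases eq_or_lt_of_le hb with hb0 | hb0
    · -- b = 0
      have hb0' : b = 0 := hb0.symm
      have hc0' : c = 0 := by simp [hcdef, hb0']
      simp [hb0', hc0']
    · have hcpos : 0 < c := Real.sqrt_pos.mpr hb0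
      have hpart2 : (∫ t in c..1, min 1 (b / t ^ 2)) ≤ c := by
        have hzpow : (∫ t in c..1, b * t ^ (-2:ℤ)) = b * (c⁻¹ - 1) := by
          rw [intervalIntegral.integral_const_mul]
          rw [integral_zpow (Or.inr ⟨by norm_num, ?_⟩)]
          · norm_num
            left
            ring
          · rw [Set.uIcc_of_le hc1]
            intro h
            exact absurd h.1 (not_le.mpr hcpos)
        have hmono : (∫ t in c..1, min 1 (b / t ^ 2)) ≤ ∫ t in c..1, b * t ^ (-2:ℤ) := by
          refine intervalIntegral.integral_mono_on hc1 (hint0 c hc0 hc1) ?_ fun t ht => ?_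
          · apply ContinuousOn.intervalIntegrable
            apply ContinuousOn.mul continuousOn_const
            apply ContinuousOn.zpow₀ continuousOn_id
            intro t ht
            left
            rw [Set.uIcc_of_le hc1] at ht
            exact ne_of_gt (lt_of_lt_of_le hcpos ht.1)
          · have ht0 : 0 < t := lt_of_lt_of_le hcpos ht.1
            have : b * t ^ (-2:ℤ) = b / t ^ 2 := by
              rw [zpow_neg, ← div_eq_mul_inv]
              norm_cast
            rw [this]
            exact min_le_right _ _
        have : b * (c⁻¹ - 1) = c - b := by
          have : b * c⁻¹ = c := by
            rw [← hcc]
            field_simp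
          nlinarith
        calc (∫ t in c..1, min 1 (b / t ^ 2)) ≤ b * (c⁻¹ - 1) := by rw [← hzpow] at *; exact hmono
          _ = c - b := this
          _ ≤ c := by linarith
      linarith


lemma aux_doob {Ω : Type} {mΩ : MeasurableSpace Ω} {P : Measure Ω} [IsProbabilityMeasure P]
    {𝒢 : Filtration ℕ mΩ} {X : ℕ → Ω → ℝ} (hX : Submartingale X 𝒢 P) (hXnn : 0 ≤ X)
    {n : ℕ} {b t : ℝ} (hb : ∫ ω, X n ω ∂P ≤ b) (ht : 0 < t) :
    (P {ω | t ≤ (Finset.range (n+1)).sup' Finset.nonempty_range_add_one fun k => X k ω}).toReal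
      ≤ b / t := by
  have hb0 : 0 ≤ b := le_trans (integral_nonneg fun ω => hXnn n ω) hb
  have h := maximal_ineq hX hXnn (ε := t.toNNReal) (n := n)
  set S := {ω | (t.toNNReal : ℝ) ≤ (Finset.range (n+1)).sup' Finset.nonempty_range_add_one
    fun k => X k ω} with hS
  have hcoe : (t.toNNReal : ℝ) = t := Real.coe_toNNReal t ht.le
  have hSeq : S = {ω | t ≤ (Finset.range (n+1)).sup' Finset.nonempty_range_add_one
      fun k => X k ω} := by rw [hS, hcoe]
  have h2 : ENNReal.ofReal (∫ ω in S, X n ω ∂P) ≤ ENNReal.ofReal b := by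
    refine ENNReal.ofReal_le_ofReal (le_trans ?_ hb)
    exact setIntegral_le_integral (hX.integrable n)
      (Filter.Eventually.of_forall fun ω => hXnn n ω)
  have h3 : (t.toNNReal : ℝ≥0∞) * P S ≤ ENNReal.ofReal b := le_trans h h2
  have htne : (t.toNNReal : ℝ≥0∞) ≠ 0 := by
    simp [Real.toNNReal_eq_zero, not_le, ht]
  have h4 : P S ≤ ENNReal.ofReal b / (t.toNNReal : ℝ≥0∞) := by
    rw [ENNReal.le_div_iff_mul_le (Or.inl htne) (Or.inl ENNReal.coe_ne_top)]
    rw [mul_comm]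
    exact h3
  have h5 : (P S).toReal ≤ (ENNReal.ofReal b / (t.toNNReal : ℝ≥0∞)).toReal := by
    refine ENNReal.toReal_mono ?_ h4
    exact (ENNReal.div_lt_top ENNReal.ofReal_ne_top htne).ne
  rw [← hSeq]
  refine h5.trans ?_
  rw [ENNReal.toReal_div, ENNReal.toReal_ofReal hb0]
  simp [hcoe]

lemma aux_core {Ω : Type} {mΩ : MeasurableSpace Ω} (P : Measure Ω)
    [IsProbabilityMeasure P] (ℱ : Filtration ℝ mΩ)
    (Z M : ℝ → Ω → ℝ) (α β : ℝ → Ω → ℝ) (z lam : ℝ) (hlam : 1 ≤ lam)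
    (hz0 : 0 ≤ z) (hz2 : z < 2)
    (hZcont : ∀ ω, Continuous fun t => Z t ω)
    (hZnn : ∀ t ω, 0 ≤ Z t ω)
    (hβ : ∀ t ω, |β t ω| ≤ lam)
    (hα : ∀ t ω, lam⁻¹ ≤ |α t ω| ^ 2 ∧ |α t ω| ^ 2 ≤ lam)
    (hZdecomp : ∀ t, 0 ≤ t → ∀ ω, Z t ω = z + (∫ u in (0:ℝ)..t, β u ω) + M t ω)
    (hM : Martingale M ℱ P)
    (hN : Martingale (fun t ω => (M t ω) ^ 2 - ∫ u in (0:ℝ)..t, (α u ω) ^ 2 * Z u ω) ℱ P)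
    (hM0 : ∀ ω, M 0 ω = 0)
    {s : ℝ} (hs : 0 < s) (hs1 : s < 1)
    (d : ℕ → ℝ) (hd : ∀ n, d n ∈ Set.Icc (0:ℝ) s) :
    (∫ ω, min 1 (⨆ n, |M (d n) ω|) ∂P) ≤ 2 * Real.sqrt (3 * lam ^ 2 * s) := by
  have hlam0 : (0:ℝ) < lam := lt_of_lt_of_le one_pos hlam
  -- the bounded-variation part
  have hI : ∀ t, 0 ≤ t → t ≤ s → ∀ ω, |∫ u in (0:ℝ)..t, β u ω| ≤ lam * s := by
    intro t ht hts ω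
    have h1 : ∀ u ∈ Set.uIoc (0:ℝ) t, ‖β u ω‖ ≤ lam := fun u _ => hβ u ω
    have := intervalIntegral.norm_integral_le_of_norm_le_const h1
    rw [Real.norm_eq_abs] at this
    refine this.trans ?_
    rw [abs_of_nonneg (by linarith : (0:ℝ) ≤ t - 0)]
    have : lam * (t - 0) ≤ lam * s := by nlinarith
    linarith
  -- lower bound for M
  have hMlb : ∀ t, 0 ≤ t → t ≤ s → ∀ ω, -(z + lam * s) ≤ M t ω := by
    intro t ht hts ω
    have hd1 := hZdecomp t ht ω
    have h2 := hI t ht hts ω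
    have h3 := hZnn t ω
    have := abs_le.mp h2
    have : M t ω = Z t ω - z - (∫ u in (0:ℝ)..t, β u ω) := by linarith
    cases' abs_le.mp h2 with hl hr
    linarith
  -- upper bound for M in terms of Z
  have hMub : ∀ t, 0 ≤ t → t ≤ s → ∀ ω, Z t ω ≤ z + lam * s + M t ω := by
    intro t ht hts ω
    have hd1 := hZdecomp t ht ω
    cases' abs_le.mp (hI t ht hts ω) with hl hr
    linarith
  -- expectation of M vanishes
  have hEM : ∀ t, 0 ≤ t → (∫ ω, M t ω ∂P) = 0 := by
    intro t ht
    have h := hM.setIntegral_eq ht (@MeasurableSet.univ Ω (ℱ 0))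
    rw [Measure.restrict_univ] at h
    rw [← h]
    simp [hM0]
  -- the quadratic-variation process
  set A : ℝ → Ω → ℝ := fun t ω => ∫ u in (0:ℝ)..t, (α u ω) ^ 2 * Z u ω with hAdef
  have hAnn : ∀ t, 0 ≤ t → ∀ ω, 0 ≤ A t ω := by
    intro t ht ω
    refine intervalIntegral.integral_nonneg ht fun u _ => ?_
    exact mul_nonneg (sq_nonneg _) (hZnn u ω)
  have hAmeas : ∀ t, StronglyMeasurable (A t) := by
    intro t
    have h1 : StronglyMeasurable (fun ω => M t ω ^ 2) := by
      have := ((hM.stronglyAdapted t).mono (ℱ.le t)).mul ((hM.stronglyAdapted t).mono (ℱ.le t))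
      simpa [sq] using (show StronglyMeasurable (fun ω => M t ω * M t ω) from this)
    have h2 : StronglyMeasurable (fun ω => (M t ω) ^ 2 - A t ω) :=
      (hN.stronglyAdapted t).mono (ℱ.le t)
    have h3 : A t = fun ω => M t ω ^ 2 - (M t ω ^ 2 - A t ω) := by ext ω; ring
    rw [h3]
    exact h1.sub h2
  have hA_le : ∀ t, 0 ≤ t → t ≤ s → ∀ ω, A t ω ≤ lam * ∫ u in (0:ℝ)..s, Z u ω := by
    intro t ht hts ω
    have hZint : ∀ a b : ℝ, IntervalIntegrable (fun u => lam * Z u ω) MeasureTheory.volume a b :=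
      fun a b => (Continuous.intervalIntegrable (continuous_const.mul (hZcont ω)) a b)
    have hlamZ : lam * (∫ u in (0:ℝ)..t, Z u ω) ≤ lam * ∫ u in (0:ℝ)..s, Z u ω := by
      refine mul_le_mul_of_nonneg_left ?_ hlam0.le
      refine intervalIntegral.integral_mono_interval le_rfl ht hts ?_
        ((hZcont ω).intervalIntegrable _ _)
      exact Filter.Eventually.of_forall fun u => hZnn u ω
    by_cases hii : IntervalIntegrable (fun u => (α u ω) ^ 2 * Z u ω) MeasureTheory.volume 0 t
    · have h1 : A t ω ≤ ∫ u in (0:ℝ)..t, lam * Z u ω := by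
        refine intervalIntegral.integral_mono_on ht hii (hZint 0 t) fun u _ => ?_
        refine mul_le_mul_of_nonneg_right ?_ (hZnn u ω)
        have := (hα u ω).2
        calc (α u ω) ^ 2 = |α u ω| ^ 2 := (sq_abs _).symm
          _ ≤ lam := this
      rw [intervalIntegral.integral_const_mul] at h1
      exact h1.trans hlamZ
    · have h0 : A t ω = 0 := intervalIntegral.integral_undef hii
      rw [h0]
      have : 0 ≤ ∫ u in (0:ℝ)..s, Z u ω :=
        intervalIntegral.integral_nonneg hs.le fun u _ => hZnn u ω
      positivity
  -- Riemann-sum majorant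
  set R : ℕ → Ω → ℝ := fun n ω =>
    (s / n) * ∑ k ∈ Finset.range n, (z + lam * s + M (k * s / n) ω) with hRdef
  have hgrid : ∀ n : ℕ, ∀ k, k < n → (0:ℝ) ≤ k * s / n ∧ (k:ℝ) * s / n ≤ s := by
    intro n k hk
    have hn0 : (0:ℝ) < n := by
      have : 0 < n := lt_of_le_of_lt (Nat.zero_le k) hk
      exact_mod_cast this
    constructor
    · positivity
    · rw [div_le_iff₀ hn0]
      have : (k:ℝ) ≤ n := by exact_mod_cast hk.le
      nlinarith
  have hRnn : ∀ n ω, 0 ≤ R n ω := by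
    intro n ω
    refine mul_nonneg (by positivity) (Finset.sum_nonneg fun k hk => ?_)
    rw [Finset.mem_range] at hk
    obtain ⟨h1, h2⟩ := hgrid n k hk
    have := hMlb _ h1 h2 ω
    linarith
  have hRmeas : ∀ n, StronglyMeasurable (R n) := by
    intro n
    refine (stronglyMeasurable_const.mul (Finset.stronglyMeasurable_fun_sum _ fun k _ => ?_))
    exact stronglyMeasurable_const.add ((hM.stronglyAdapted _).mono (ℱ.le _))
  have hRint : ∀ n, Integrable (R n) P := by
    intro n
    refine (Integrable.const_mul ?_ _)
    exact integrable_finset_sum _ fun k _ => (integrable_const _).add (hM.integrable _)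
  have hER : ∀ n : ℕ, 1 ≤ n → (∫ ω, R n ω ∂P) = s * (z + lam * s) := by
    intro n hn
    have hn0 : (0:ℝ) < n := by exact_mod_cast hn
    rw [hRdef]
    simp only
    rw [integral_const_mul]
    have hsum : (∫ a, ∑ k ∈ Finset.range n, (z + lam * s + M (k * s / n) a) ∂P)
        = ∑ k ∈ Finset.range n, ∫ a, (z + lam * s + M (k * s / n) a) ∂P := by
      apply integral_finset_sum
      intro k _
      exact (integrable_const _).add (hM.integrable _)
    rw [hsum]
    have : ∀ k ∈ Finset.range n, (∫ ω, (z + lam * s + M (k * s / n) ω) ∂P) = z + lam * s := by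
      intro k hk
      rw [Finset.mem_range] at hk
      rw [integral_add (integrable_const _) (hM.integrable _), integral_const,
        hEM _ (hgrid n k hk).1]
      simp
    rw [Finset.sum_congr rfl this, Finset.sum_const, Finset.card_range]
    field_simp
    ring
  -- the measurable ENNReal majorant W
  set W : Ω → ℝ≥0∞ := fun ω => Filter.liminf (fun n => ENNReal.ofReal (R n ω)) atTop with hWdef
  have hWmeas : Measurable W := by
    refine Measurable.liminf fun n => ?_
    exact ENNReal.measurable_ofReal.comp (hRmeas n).measurable
  have hWge : ∀ ω, ENNReal.ofReal (∫ u in (0:ℝ)..s, Z u ω) ≤ W ω := by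
    intro ω
    have hten : Tendsto (fun n : ℕ => ENNReal.ofReal
        ((s / n) * ∑ k ∈ Finset.range n, Z (k * s / n) ω)) atTop
        (𝓝 (ENNReal.ofReal (∫ u in (0:ℝ)..s, Z u ω))) :=
      (ENNReal.continuous_ofReal.continuousAt).tendsto.comp (aux_riemann (hZcont ω) hs)
    have hle : ∀ n : ℕ, ENNReal.ofReal ((s / n) * ∑ k ∈ Finset.range n, Z (k * s / n) ω)
        ≤ ENNReal.ofReal (R n ω) := by
      intro n
      refine ENNReal.ofReal_le_ofReal ?_
      refine mul_le_mul_of_nonneg_left (Finset.sum_le_sum fun k hk => ?_) (by positivity)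
      rw [Finset.mem_range] at hk
      obtain ⟨h1, h2⟩ := hgrid n k hk
      exact hMub _ h1 h2 ω
    calc ENNReal.ofReal (∫ u in (0:ℝ)..s, Z u ω)
        = Filter.liminf (fun n : ℕ => ENNReal.ofReal
            ((s / n) * ∑ k ∈ Finset.range n, Z (k * s / n) ω)) atTop := hten.liminf_eq.symm
      _ ≤ W ω := Filter.liminf_le_liminf (Filter.Eventually.of_forall hle)
  have hWint : ∫⁻ ω, W ω ∂P ≤ ENNReal.ofReal (s * (z + lam * s)) := by
    refine le_trans (lintegral_liminf_le fun n =>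
      ENNReal.measurable_ofReal.comp (hRmeas n).measurable) ?_
    have hev : ∀ᶠ n : ℕ in atTop, (∫⁻ ω, ENNReal.ofReal (R n ω) ∂P)
        = ENNReal.ofReal (s * (z + lam * s)) := by
      filter_upwards [Filter.eventually_ge_atTop 1] with n hn
      rw [← ofReal_integral_eq_lintegral_ofReal (hRint n)
        (Filter.Eventually.of_forall (hRnn n)), hER n hn]
    rw [Filter.liminf_congr hev, Filter.liminf_const]
  -- consequences : A is integrable with small expectation, M is square integrable
  set b : ℝ := lam * (s * (z + lam * s)) with hbdef
  have hb0 : 0 ≤ b := by positivity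
  have hAlin : ∀ t, 0 ≤ t → t ≤ s →
      (∫⁻ ω, ENNReal.ofReal (A t ω) ∂P) ≤ ENNReal.ofReal b := by
    intro t ht hts
    have hpt : ∀ ω, ENNReal.ofReal (A t ω) ≤ ENNReal.ofReal lam * W ω := by
      intro ω
      calc ENNReal.ofReal (A t ω) ≤ ENNReal.ofReal (lam * ∫ u in (0:ℝ)..s, Z u ω) :=
            ENNReal.ofReal_le_ofReal (hA_le t ht hts ω)
        _ = ENNReal.ofReal lam * ENNReal.ofReal (∫ u in (0:ℝ)..s, Z u ω) :=
            ENNReal.ofReal_mul hlam0.le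
        _ ≤ ENNReal.ofReal lam * W ω := mul_le_mul_right (hWge ω) _
    calc (∫⁻ ω, ENNReal.ofReal (A t ω) ∂P) ≤ ∫⁻ ω, ENNReal.ofReal lam * W ω ∂P :=
          lintegral_mono hpt
      _ = ENNReal.ofReal lam * ∫⁻ ω, W ω ∂P := lintegral_const_mul _ hWmeas
      _ ≤ ENNReal.ofReal lam * ENNReal.ofReal (s * (z + lam * s)) := mul_le_mul_right hWint _
      _ = ENNReal.ofReal b := by rw [← ENNReal.ofReal_mul hlam0.le]
  have hAint : ∀ t, 0 ≤ t → t ≤ s → Integrable (A t) P := by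
    intro t ht hts
    refine ⟨(hAmeas t).aestronglyMeasurable, ?_⟩
    rw [hasFiniteIntegral_iff_norm]
    have : ∀ ω, ENNReal.ofReal ‖A t ω‖ = ENNReal.ofReal (A t ω) := by
      intro ω
      rw [Real.norm_eq_abs, abs_of_nonneg (hAnn t ht ω)]
    calc (∫⁻ ω, ENNReal.ofReal ‖A t ω‖ ∂P) = ∫⁻ ω, ENNReal.ofReal (A t ω) ∂P := by
          exact lintegral_congr this
      _ ≤ ENNReal.ofReal b := hAlin t ht hts
      _ < ⊤ := ENNReal.ofReal_lt_top
  have hEA : ∀ t, 0 ≤ t → t ≤ s → (∫ ω, A t ω ∂P) ≤ b := by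
    intro t ht hts
    rw [integral_eq_lintegral_of_nonneg_ae (Filter.Eventually.of_forall (hAnn t ht))
      (hAmeas t).aestronglyMeasurable]
    calc (∫⁻ ω, ENNReal.ofReal (A t ω) ∂P).toReal
        ≤ (ENNReal.ofReal b).toReal := by
          refine ENNReal.toReal_mono ENNReal.ofReal_ne_top (hAlin t ht hts)
      _ = b := ENNReal.toReal_ofReal hb0
  have hM2int : ∀ t, 0 ≤ t → t ≤ s → Integrable (fun ω => M t ω ^ 2) P := by
    intro t ht hts
    have h3 : (fun ω => M t ω ^ 2) = fun ω => (M t ω ^ 2 - A t ω) + A t ω := by ext ω; ring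
    rw [h3]
    exact (hN.integrable t).add (hAint t ht hts)
  have hEN : ∀ t, 0 ≤ t → (∫ ω, (M t ω ^ 2 - A t ω) ∂P) = 0 := by
    intro t ht
    have h := hN.setIntegral_eq ht (@MeasurableSet.univ Ω (ℱ 0))
    rw [Measure.restrict_univ] at h
    rw [← h]
    have : ∀ ω, M 0 ω ^ 2 - A 0 ω = 0 := by
      intro ω
      rw [hM0, hAdef]
      simp
    simp [this, hM0]
  have hEM2 : ∀ t, 0 ≤ t → t ≤ s → (∫ ω, M t ω ^ 2 ∂P) ≤ b := by
    intro t ht hts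
    have h3 : (fun ω => M t ω ^ 2) = fun ω => (M t ω ^ 2 - A t ω) + A t ω := by ext ω; ring
    rw [h3, integral_add (hN.integrable t) (hAint t ht hts), hEN t ht]
    simpa using hEA t ht hts
  -- the countable supremum G
  set G : Ω → ℝ := fun ω => ⨆ n, |M (d n) ω| with hGdef
  have hbdd : ∀ ω, BddAbove (Set.range fun n => |M (d n) ω|) := by
    intro ω
    obtain ⟨K, hK⟩ : ∃ K, ∀ v ∈ Icc (0:ℝ) s, |Z v ω - z| ≤ K := by
      obtain ⟨K, hK⟩ := isCompact_Icc.exists_bound_of_continuousOn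
        (((hZcont ω).sub continuous_const).continuousOn (s := Icc (0:ℝ) s))
      exact ⟨K, fun v hv => by simpa using hK v hv⟩
    refine ⟨K + lam * s, ?_⟩
    rintro x ⟨n, rfl⟩
    have hdn := hd n
    have h1 := hZdecomp (d n) hdn.1 ω
    have h2 := hI (d n) hdn.1 hdn.2 ω
    have h3 := hK (d n) hdn
    have heq : M (d n) ω = (Z (d n) ω - z) - (∫ u in (0:ℝ)..d n, β u ω) := by linarith
    show |M (d n) ω| ≤ K + lam * s
    rw [heq, sub_eq_add_neg]
    refine (abs_add_le _ _).trans ?_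
    rw [abs_neg]
    exact add_le_add h3 h2
  have hGle : ∀ n ω, |M (d n) ω| ≤ G ω := fun n ω => le_ciSup (hbdd ω) n
  have hG0 : ∀ ω, 0 ≤ G ω := fun ω => (abs_nonneg _).trans (hGle 0 ω)
  have hGmeas : Measurable G := by
    refine Measurable.iSup fun n => ?_
    exact ((hM.stronglyAdapted _).mono (ℱ.le _)).measurable.abs
  -- the partial suprema
  set Gn : ℕ → Ω → ℝ := fun n ω =>
    (Finset.range (n+1)).sup' Finset.nonempty_range_add_one (fun k => |M (d k) ω|) with hGndef
  have hGnmeas : ∀ n, Measurable (Gn n) := by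
    intro n
    have h := Finset.measurable_sup' (Finset.nonempty_range_add_one (n := n))
      (f := fun k => fun ω => |M (d k) ω|)
      (fun k _ => ((hM.stronglyAdapted _).mono (ℱ.le _)).measurable.abs)
    have heq : (Finset.range (n+1)).sup' Finset.nonempty_range_add_one
        (fun k => fun ω => |M (d k) ω|) = Gn n := by
      ext ω
      rw [Finset.sup'_apply]
    rwa [heq] at h
  have hGnnn : ∀ n ω, 0 ≤ Gn n ω := by
    intro n ω
    refine (abs_nonneg (M (d 0) ω)).trans ?_
    have h0mem : (0:ℕ) ∈ Finset.range (n+1) := Finset.mem_range.mpr n.succ_pos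
    have := Finset.le_sup' (f := fun k => |M (d k) ω|) h0mem
    exact this
  have hGnle : ∀ n ω, Gn n ω ≤ G ω := fun n ω => Finset.sup'_le _ _ fun k _ => hGle k ω
  have hGntend : ∀ ω, Tendsto (fun n => Gn n ω) atTop (𝓝 (G ω)) := by
    intro ω
    have hmono : Monotone fun n => Gn n ω := by
      intro a c hac
      exact Finset.sup'_mono _ (Finset.range_subset_range.mpr (by omega)) _
    have hbddn : BddAbove (Set.range fun n => Gn n ω) := by
      refine ⟨G ω, ?_⟩
      rintro x ⟨n, rfl⟩
      exact hGnle n ω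
    have h1 := tendsto_atTop_ciSup hmono hbddn
    have h2 : (⨆ n, Gn n ω) = G ω := by
      apply le_antisymm
      · exact ciSup_le fun n => hGnle n ω
      · refine ciSup_le fun k => ?_
        exact (Finset.le_sup' (fun j => |M (d j) ω|)
          (Finset.self_mem_range_succ k)).trans (le_ciSup hbddn k)
    rwa [h2] at h1
  have hminGn_int : ∀ n, Integrable (fun ω => min 1 (Gn n ω)) P := by
    intro n
    refine Integrable.mono' (integrable_const 1)
      (measurable_const.min (hGnmeas n)).aestronglyMeasurable
      (Filter.Eventually.of_forall fun ω => ?_)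
    rw [Real.norm_eq_abs, abs_le]
    exact ⟨by have := hGnnn n ω; have : (0:ℝ) ≤ min 1 (Gn n ω) := le_min zero_le_one this; linarith,
      min_le_left _ _⟩
  -- Doob's inequality for each n
  have hdoob : ∀ n, (∫ ω, min 1 (Gn n ω) ∂P) ≤ 2 * Real.sqrt b := by
    intro n
    -- the sorted finite grid
    set F : Finset ℝ := (Finset.range (n+1)).image d with hFdef
    have hFne : F.Nonempty :=
      ⟨d 0, Finset.mem_image_of_mem d (Finset.mem_range.mpr n.succ_pos)⟩
    have hFmem : ∀ r ∈ F, r ∈ Icc (0:ℝ) s := by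
      intro r hr
      obtain ⟨k, _, rfl⟩ := Finset.mem_image.mp hr
      exact hd k
    set e := F.orderIsoOfFin rfl with hedef
    set u : ℕ → ℝ := fun k => if h : k < F.card then (e ⟨k, h⟩ : ℝ) else s with hudef
    have humem : ∀ k, u k ∈ Icc (0:ℝ) s := by
      intro k
      rw [hudef]
      by_cases h : k < F.card
      · simp only [dif_pos h]
        exact hFmem _ (e ⟨k, h⟩).2
      · simp only [dif_neg h]
        exact ⟨hs.le, le_rfl⟩
    have humono : Monotone u := by
      intro i j hij
      rw [hudef]
      by_cases hi : i < F.card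
      · by_cases hj : j < F.card
        · simp only [dif_pos hi, dif_pos hj]
          have h1 : (⟨i, hi⟩ : Fin F.card) ≤ ⟨j, hj⟩ := hij
          exact Subtype.coe_le_coe.mpr (e.monotone h1)
        · simp only [dif_pos hi, dif_neg hj]
          exact (hFmem _ (e ⟨i, hi⟩).2).2
      · have hj : ¬ j < F.card := fun hj => hi (lt_of_le_of_lt hij hj)
        simp only [dif_neg hi, dif_neg hj, le_refl]
    set 𝒢 : Filtration ℕ mΩ :=
      ⟨fun k => ℱ (u k), fun i j hij => ℱ.mono (humono hij), fun k => ℱ.le (u k)⟩ with h𝒢def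
    set X : ℕ → Ω → ℝ := fun k ω => M (u k) ω ^ 2 with hXdef
    have hXint : ∀ k, Integrable (X k) P := fun k => hM2int _ (humem k).1 (humem k).2
    have hXnn : (0 : ℕ → Ω → ℝ) ≤ X :=
      Pi.le_def.mpr fun k => Pi.le_def.mpr fun ω => sq_nonneg _
    have hsub : Submartingale X 𝒢 P := by
      refine ⟨?_, ?_, hXint⟩
      · intro k
        show StronglyMeasurable[ℱ (u k)] (X k)
        have h1 := (hM.stronglyAdapted (u k)).mul (hM.stronglyAdapted (u k))
        have h2 : X k = fun ω => M (u k) ω * M (u k) ω := by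
          rw [hXdef]; ext ω; ring
        rw [h2]; exact h1
      · intro i j hij
        have huij : u i ≤ u j := humono hij
        have hle' : ℱ (u i) ≤ mΩ := ℱ.le _
        have hXi : StronglyMeasurable[ℱ (u i)] (M (u i)) := hM.stronglyAdapted (u i)
        have hi2 : Integrable (fun ω => M (u i) ω ^ 2) P := hXint i
        have hj2 : Integrable (X j) P := hXint j
        set c2 : Ω → ℝ := fun ω => (2:ℝ) * M (u i) ω with hc2def
        set Fm : Ω → ℝ := c2 * M (u j) with hFmdef
        set Hm : Ω → ℝ := fun ω => M (u i) ω ^ 2 with hHmdef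
        have hFmapp : ∀ ω, Fm ω = 2 * M (u i) ω * M (u j) ω := fun ω => rfl
        have hprod2 : Integrable Fm P := by
          refine Integrable.mono' ((hi2.add hj2).const_mul 2) ?_
            (Filter.Eventually.of_forall fun ω => ?_)
          · exact (((hXi.mono hle').const_mul 2).mul
              ((hM.stronglyAdapted (u j)).mono (ℱ.le _))).aestronglyMeasurable
          · have hHX : (2 : ℝ) * (Hm + X j) ω = 2 * (M (u i) ω ^ 2 + M (u j) ω ^ 2) := rfl
            show ‖Fm ω‖ ≤ 2 * (Hm + X j) ω
            rw [hFmapp ω, Real.norm_eq_abs, hHX]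
            have h1 : |2 * M (u i) ω * M (u j) ω| = 2 * (|M (u i) ω| * |M (u j) ω|) := by
              rw [abs_mul, abs_mul, abs_two]; ring
            rw [h1]
            nlinarith [sq_nonneg (|M (u i) ω| - |M (u j) ω|), sq_abs (M (u i) ω),
              sq_abs (M (u j) ω)]
        have hlin : Integrable (Fm - Hm) P := hprod2.sub hi2
        have hpt : (Fm - Hm) ≤ᵐ[P] X j := by
          refine Filter.Eventually.of_forall fun ω => ?_
          have : X j ω = M (u j) ω ^ 2 := rfl
          rw [Pi.sub_apply, hFmapp ω, this]
          have : Hm ω = M (u i) ω ^ 2 := rfl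
          rw [this]
          nlinarith [sq_nonneg (M (u j) ω - M (u i) ω)]
        have h2 := condExp_mono (μ := P) (m := ℱ (u i)) hlin hj2 hpt
        have e1 := condExp_sub (μ := P) (m := ℱ (u i)) hprod2 hi2
        have e2 := condExp_mul_of_stronglyMeasurable_left (μ := P) (hXi.const_mul 2) hprod2
          (hM.integrable (u j))
        have e3 := hM.condExp_ae_eq huij
        have e4 : P[Hm|ℱ (u i)] = Hm := by
          refine condExp_of_stronglyMeasurable hle' ?_ hi2
          have h2' : Hm = fun ω => M (u i) ω * M (u i) ω := by
            rw [hHmdef]; ext ω; ring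
          rw [h2']; exact hXi.mul hXi
        show X i ≤ᵐ[P] P[X j|𝒢 i]
        have hGieq : P[X j|𝒢 i] = P[X j|ℱ (u i)] := rfl
        rw [hGieq]
        filter_upwards [h2, e1, e2, e3] with ω hω2 hω1 hω2' hω3
        have hB : (P[Fm|ℱ (u i)]) ω = 2 * M (u i) ω * M (u i) ω := by
          rw [hω2', Pi.mul_apply, hω3]
        have he4 : (P[Hm|ℱ (u i)]) ω = M (u i) ω ^ 2 := by
          rw [e4]
        have hA : (P[Fm - Hm|ℱ (u i)]) ω = M (u i) ω ^ 2 := by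
          rw [hω1, Pi.sub_apply, hB, he4]
          ring
        have hXiω : X i ω = M (u i) ω ^ 2 := rfl
        rw [hXiω, ← hA]
        exact hω2
    -- Doob's maximal inequality, pointwise in the threshold
    have hDoobt : ∀ t : ℝ, t ∈ Set.Ioc (0:ℝ) 1 →
        (P {ω | t ≤ min 1 (Gn n ω)}).toReal ≤ min 1 (b / t ^ 2) := by
      intro t ht
      refine le_min ?_ ?_
      · calc (P {ω | t ≤ min 1 (Gn n ω)}).toReal
            ≤ (P Set.univ).toReal :=
              ENNReal.toReal_mono (measure_ne_top _ _) (measure_mono (Set.subset_univ _))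
          _ = 1 := by simp
      · have hsup : ∀ ω, t ≤ min 1 (Gn n ω) →
            t ^ 2 ≤ (Finset.range (n+1)).sup' Finset.nonempty_range_add_one fun k => X k ω := by
          intro ω hω
          obtain ⟨k₀, hk₀mem, hk₀⟩ := Finset.exists_mem_eq_sup'
            (Finset.nonempty_range_add_one) (fun k => |M (d k) ω|)
          have h1 : t ≤ |M (d k₀) ω| := by
            have hGnω : t ≤ Gn n ω := le_trans hω (min_le_right _ _)
            have : Gn n ω = |M (d k₀) ω| := hk₀
            linarith
          have h2 : t ^ 2 ≤ M (d k₀) ω ^ 2 := by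
            rw [← sq_abs (M (d k₀) ω)]
            exact pow_le_pow_left₀ ht.1.le h1 2
          have hdk₀F : d k₀ ∈ F := Finset.mem_image_of_mem d hk₀mem
          have hcard : F.card ≤ n + 1 :=
            le_trans Finset.card_image_le (by simp)
          obtain ⟨j, hj⟩ : ∃ j : Fin F.card, (e j : ℝ) = d k₀ :=
            ⟨e.symm ⟨d k₀, hdk₀F⟩, by simp⟩
          have hjmem : (j : ℕ) ∈ Finset.range (n + 1) :=
            Finset.mem_range.mpr (lt_of_lt_of_le j.2 hcard)
          have huj : u (j : ℕ) = d k₀ := by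
            rw [hudef]
            simp only [dif_pos j.2, Fin.eta]
            exact hj
          refine le_trans h2 ?_
          have hle := Finset.le_sup' (f := fun k => X k ω) hjmem
          have hXj : X (j : ℕ) ω = M (d k₀) ω ^ 2 := by
            have : X (j : ℕ) ω = M (u (j : ℕ)) ω ^ 2 := rfl
            rw [this, huj]
          rw [← hXj]
          exact hle
        have hdb := aux_doob (P := P) hsub hXnn (n := n) (b := b) (t := t ^ 2)
          (hEM2 (u n) (humem n).1 (humem n).2) (pow_pos ht.1 2)
        refine le_trans ?_ hdb
        exact ENNReal.toReal_mono
          ((measure_lt_top P _).ne)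
          (measure_mono fun ω hω => hsup ω hω)
    -- layer-cake
    have hlayer := (hminGn_int n).integral_eq_integral_Ioc_meas_le (M := 1)
      (Filter.Eventually.of_forall fun ω => le_min zero_le_one (hGnnn n ω))
      (Filter.Eventually.of_forall fun ω => min_le_left _ _)
    rw [hlayer]
    have hanti : Antitone fun t : ℝ => (P {ω | t ≤ min 1 (Gn n ω)}).toReal := by
      intro t₁ t₂ h12
      refine ENNReal.toReal_mono (measure_ne_top _ _) (measure_mono ?_)
      intro ω hω
      exact le_trans h12 hω
    have hint1 : IntegrableOn (fun t : ℝ => (P {ω | t ≤ min 1 (Gn n ω)}).toReal)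
        (Ioc (0:ℝ) 1) MeasureTheory.volume := by
      refine Integrable.mono' ((integrableOn_const measure_Ioc_lt_top.ne) :
          IntegrableOn (fun _ : ℝ => (1:ℝ)) (Ioc (0:ℝ) 1) MeasureTheory.volume)
        hanti.measurable.aestronglyMeasurable (Filter.Eventually.of_forall fun t => ?_)
      rw [Real.norm_eq_abs, abs_of_nonneg ENNReal.toReal_nonneg]
      calc (P {ω | t ≤ min 1 (Gn n ω)}).toReal
          ≤ (P Set.univ).toReal :=
            ENNReal.toReal_mono (measure_ne_top _ _) (measure_mono (Set.subset_univ _))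
        _ = 1 := by simp
    have hint2 : IntegrableOn (fun t : ℝ => min 1 (b / t ^ 2)) (Ioc (0:ℝ) 1)
        MeasureTheory.volume := by
      refine Integrable.mono' ((integrableOn_const measure_Ioc_lt_top.ne) :
          IntegrableOn (fun _ : ℝ => (1:ℝ)) (Ioc (0:ℝ) 1) MeasureTheory.volume)
        (measurable_const.min (measurable_const.div
          (measurable_id.pow_const 2))).aestronglyMeasurable
        (Filter.Eventually.of_forall fun t => ?_)
      rw [Real.norm_eq_abs, abs_le]
      constructor
      · have : (0:ℝ) ≤ min 1 (b / t ^ 2) := le_min zero_le_one (by positivity)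
        linarith
      · exact min_le_left _ _
    calc (∫ t in Ioc (0:ℝ) 1, (P {ω | t ≤ min 1 (Gn n ω)}).toReal)
        ≤ ∫ t in Ioc (0:ℝ) 1, min 1 (b / t ^ 2) :=
          setIntegral_mono_on hint1 hint2 measurableSet_Ioc fun t ht => hDoobt t ht
      _ ≤ 2 * Real.sqrt b := aux_min_int hb0
  -- pass to the limit
  have hminG_int : Integrable (fun ω => min 1 (G ω)) P := by
    refine Integrable.mono' (integrable_const 1)
      (measurable_const.min hGmeas).aestronglyMeasurable
      (Filter.Eventually.of_forall fun ω => ?_)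
    rw [Real.norm_eq_abs, abs_le]
    have h0 : (0:ℝ) ≤ min 1 (G ω) := le_min zero_le_one (hG0 ω)
    exact ⟨by linarith, min_le_left _ _⟩
  have hlim : Tendsto (fun n => ∫ ω, min 1 (Gn n ω) ∂P) atTop (𝓝 (∫ ω, min 1 (G ω) ∂P)) := by
    refine tendsto_integral_of_dominated_convergence (fun _ => (1:ℝ))
      (fun n => (measurable_const.min (hGnmeas n)).aestronglyMeasurable)
      (integrable_const 1) (fun n => Filter.Eventually.of_forall fun ω => ?_)
      (Filter.Eventually.of_forall fun ω => ?_)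
    · show ‖min 1 (Gn n ω)‖ ≤ (1:ℝ)
      rw [Real.norm_eq_abs, abs_le]
      have h0 : (0:ℝ) ≤ min 1 (Gn n ω) := le_min zero_le_one (hGnnn n ω)
      exact ⟨by linarith, min_le_left _ _⟩
    · exact Filter.Tendsto.min tendsto_const_nhds (hGntend ω)
  have hfinal : (∫ ω, min 1 (G ω) ∂P) ≤ 2 * Real.sqrt b :=
    le_of_tendsto hlim (Filter.Eventually.of_forall hdoob)
  refine hfinal.trans ?_
  have hble : b ≤ 3 * lam ^ 2 * s := by
    have h1 : z + lam * s ≤ 3 * lam := by nlinarith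
    have h2 : s * (z + lam * s) ≤ s * (3 * lam) := by nlinarith
    calc b = lam * (s * (z + lam * s)) := hbdef
      _ ≤ lam * (s * (3 * lam)) := by nlinarith
      _ = 3 * lam ^ 2 * s := by ring
  have := Real.sqrt_le_sqrt hble
  linarith


/-- The small-initial-value estimate in Lemma 3.1(a).  The SDE
`dZ_t = β_t dt + α_t √Z_t dB_t` is encoded by the decomposition
`Z_t = z + ∫₀ᵗ β_s ds + M_t`, where `M` is a martingale whose quadratic
variation is `∫₀ᵗ α_s² Z_s ds`, i.e. `M_t² − ∫₀ᵗ α_s² Z_s ds` is a martingale. -/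
theorem small_initial_value_estimate (lam : ℝ) (hlam : 1 ≤ lam) :
    ∃ C > (0:ℝ), ∀ {Ω : Type} {mΩ : MeasurableSpace Ω} (P : Measure Ω),
      IsProbabilityMeasure P → ∀ (ℱ : Filtration ℝ mΩ)
      (Z M : ℝ → Ω → ℝ) (α β : ℝ → Ω → ℝ) (z : ℝ) (τ : Ω → ℝ),
      (0 ≤ z) → (z < 2) →
      (∀ ω, Continuous fun t => Z t ω) →
      (∀ t ω, 0 ≤ Z t ω) →
      (∀ t ω, |β t ω| ≤ lam) →
      (∀ t ω, lam⁻¹ ≤ |α t ω| ^ 2 ∧ |α t ω| ^ 2 ≤ lam) →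
      (∀ t, 0 ≤ t → ∀ ω, Z t ω = z + (∫ s in (0:ℝ)..t, β s ω) + M t ω) →
      Martingale M ℱ P →
      Martingale (fun t ω => (M t ω) ^ 2 - ∫ s in (0:ℝ)..t, (α s ω) ^ 2 * Z s ω) ℱ P →
      (∀ ω, M 0 ω = 0) →
      (∀ ω, τ ω = sInf {t : ℝ | 0 ≤ t ∧ 1 ≤ |Real.sqrt (Z t ω) - Real.sqrt z|}) →
      ∀ s : ℝ, 0 < s →
      (∫ ω, (⨆ t : Set.Icc (0:ℝ) s,
          |Real.sqrt (Z (min (t : ℝ) (τ ω)) ω) - Real.sqrt z| ^ 2) ∂P)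
        ≤ lam * s + C * Real.sqrt s := by
  have hlam0 : (0:ℝ) < lam := lt_of_lt_of_le one_pos hlam
  refine ⟨4 * lam, by positivity, ?_⟩
  intro Ω mΩ P hP ℱ Z M α β z τ hz0 hz2 hZcont hZnn hβ hα hZdecomp hM hN hM0 hτ s hs
  haveI := hP
  haveI : Nonempty (Set.Icc (0:ℝ) s) := ⟨⟨0, le_rfl, hs.le⟩⟩
  set f : Ω → ℝ := fun ω => ⨆ t : Set.Icc (0:ℝ) s,
    |Real.sqrt (Z (min (t : ℝ) (τ ω)) ω) - Real.sqrt z| ^ 2 with hfdef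
  have hRHS0 : 0 ≤ lam * s ∧ 0 ≤ 4 * lam * Real.sqrt s := by
    constructor
    · exact mul_nonneg hlam0.le hs.le
    · exact mul_nonneg (mul_nonneg (by norm_num) hlam0.le) (Real.sqrt_nonneg s)
  have hτ0 : ∀ ω, 0 ≤ τ ω := by
    intro ω
    rw [hτ ω]
    exact Real.sInf_nonneg fun x hx => hx.1
  have hZ0 : ∀ ω, Z 0 ω = z := by
    intro ω
    have := hZdecomp 0 le_rfl ω
    simpa [hM0] using this
  have hone : ∀ ω u, 0 ≤ u → u ≤ τ ω → |Real.sqrt (Z u ω) - Real.sqrt z| ≤ 1 := by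
    intro ω u hu huτ
    by_contra hcon
    push_neg at hcon
    have hgc : ContinuousOn (fun v => |Real.sqrt (Z v ω) - Real.sqrt z|) (Icc 0 u) :=
      (((Real.continuous_sqrt.comp (hZcont ω)).sub continuous_const).abs).continuousOn
    have hg0 : |Real.sqrt (Z 0 ω) - Real.sqrt z| = 0 := by simp [hZ0 ω]
    have h1mem : (1:ℝ) ∈ Icc (|Real.sqrt (Z 0 ω) - Real.sqrt z|)
        (|Real.sqrt (Z u ω) - Real.sqrt z|) := by
      rw [hg0]
      exact ⟨zero_le_one, hcon.le⟩
    obtain ⟨u', hu'mem, hu'⟩ := intermediate_value_Icc hu hgc h1mem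
    have hS : u' ∈ {t : ℝ | 0 ≤ t ∧ 1 ≤ |Real.sqrt (Z t ω) - Real.sqrt z|} :=
      ⟨hu'mem.1, hu'.ge⟩
    have hτle : τ ω ≤ u' := by
      rw [hτ ω]
      exact csInf_le ⟨0, fun x hx => hx.1⟩ hS
    have hequ : u' = u := le_antisymm hu'mem.2 (le_trans huτ hτle)
    rw [hequ] at hu'
    have hu'' : |Real.sqrt (Z u ω) - Real.sqrt z| = 1 := hu'
    linarith
  have htermle1 : ∀ ω (t : Set.Icc (0:ℝ) s),
      |Real.sqrt (Z (min (t : ℝ) (τ ω)) ω) - Real.sqrt z| ^ 2 ≤ 1 := by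
    intro ω t
    have h := hone ω (min (t : ℝ) (τ ω)) (le_min t.2.1 (hτ0 ω)) (min_le_right _ _)
    calc |Real.sqrt (Z (min (t : ℝ) (τ ω)) ω) - Real.sqrt z| ^ 2 ≤ 1 ^ 2 :=
          pow_le_pow_left₀ (abs_nonneg _) h 2
      _ = 1 := one_pow 2
  have hbddf : ∀ ω, BddAbove (Set.range fun t : Set.Icc (0:ℝ) s =>
      |Real.sqrt (Z (min (t : ℝ) (τ ω)) ω) - Real.sqrt z| ^ 2) := by
    intro ω
    refine ⟨1, ?_⟩
    rintro x ⟨t, rfl⟩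
    exact htermle1 ω t
  have hfle1 : ∀ ω, f ω ≤ 1 := fun ω => ciSup_le fun t => htermle1 ω t
  by_cases hint : Integrable f P
  · rcases le_or_gt 1 s with hs1 | hs1
    · -- large time : use the trivial bound
      have h1 : (∫ ω, f ω ∂P) ≤ 1 := by
        calc (∫ ω, f ω ∂P) ≤ ∫ _ω, (1:ℝ) ∂P := integral_mono hint (integrable_const 1) hfle1
          _ = 1 := by simp
      have h2 : (1:ℝ) ≤ lam * s := by nlinarith
      linarith [hRHS0.2]
    · -- small time : the martingale estimate
      set q : ℕ → ℚ := fun n => (Denumerable.eqv ℚ).symm n with hq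
      set d : ℕ → ℝ := fun n => s * max 0 (min 1 ((q n : ℝ))) with hd
      have hdmem : ∀ n, d n ∈ Icc (0:ℝ) s := by
        intro n
        constructor
        · exact mul_nonneg hs.le (le_max_left 0 _)
        · show s * max 0 (min 1 ((q n : ℝ))) ≤ s
          have h1 : max 0 (min 1 ((q n : ℝ))) ≤ 1 := max_le zero_le_one (min_le_left _ _)
          have h2 : 0 ≤ max 0 (min 1 ((q n : ℝ))) := le_max_left 0 _
          nlinarith
      have hddense : ∀ v, 0 ≤ v → v ≤ s → ∀ δ : ℝ, 0 < δ → ∃ n, |d n - v| < δ := by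
        intro v hv0 hvs δ hδ
        obtain ⟨r, hr⟩ := exists_rat_near (v / s) (div_pos hδ hs)
        refine ⟨(Denumerable.eqv ℚ) r, ?_⟩
        have hqr : q ((Denumerable.eqv ℚ) r) = r := by simp [hq]
        have hclampv : max 0 (min 1 (v / s)) = v / s := by
          rw [min_eq_right (by rw [div_le_one hs]; exact hvs),
            max_eq_right (div_nonneg hv0 hs.le)]
        have hveq : v = s * (v / s) := by field_simp
        calc |d ((Denumerable.eqv ℚ) r) - v|
            = |s * max 0 (min 1 ((r:ℝ))) - s * (v / s)| := by rw [hd]; simp only [hqr]; rw [← hveq]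
          _ = s * |max 0 (min 1 ((r:ℝ))) - max 0 (min 1 (v / s))| := by
              rw [hclampv, ← mul_sub, abs_mul, abs_of_nonneg hs.le]
          _ ≤ s * |(r:ℝ) - v / s| := by
              have := aux_clamp_lip ((r:ℝ)) (v / s)
              nlinarith
          _ < s * (δ / s) := by
              have h2 : |(r:ℝ) - v / s| < δ / s := by rwa [abs_sub_comm] at hr
              exact (mul_lt_mul_iff_right₀ hs).mpr h2
          _ = δ := by field_simp
      -- the supremum of |M| over the countable dense set
      have hI' : ∀ t, 0 ≤ t → t ≤ s → ∀ ω, |∫ u in (0:ℝ)..t, β u ω| ≤ lam * s := by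
        intro t ht hts ω
        have h1 : ∀ u ∈ Set.uIoc (0:ℝ) t, ‖β u ω‖ ≤ lam := fun u _ => hβ u ω
        have h2 := intervalIntegral.norm_integral_le_of_norm_le_const h1
        rw [Real.norm_eq_abs] at h2
        refine h2.trans ?_
        rw [abs_of_nonneg (by linarith : (0:ℝ) ≤ t - 0)]
        nlinarith
      set G : Ω → ℝ := fun ω => ⨆ n, |M (d n) ω| with hG
      have hbddM : ∀ ω, BddAbove (Set.range fun n => |M (d n) ω|) := by
        intro ω
        obtain ⟨K, hK⟩ : ∃ K, ∀ v ∈ Icc (0:ℝ) s, |Z v ω - z| ≤ K := by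
          obtain ⟨K, hK⟩ := isCompact_Icc.exists_bound_of_continuousOn
            (((hZcont ω).sub continuous_const).continuousOn (s := Icc (0:ℝ) s))
          exact ⟨K, fun v hv => by simpa using hK v hv⟩
        refine ⟨K + lam * s, ?_⟩
        rintro x ⟨n, rfl⟩
        have hdn := hdmem n
        have h1 := hZdecomp (d n) hdn.1 ω
        have h2 := hI' (d n) hdn.1 hdn.2 ω
        have h3 := hK (d n) hdn
        have heq : M (d n) ω = (Z (d n) ω - z) - (∫ u in (0:ℝ)..d n, β u ω) := by linarith
        show |M (d n) ω| ≤ K + lam * s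
        rw [heq, sub_eq_add_neg]
        refine (abs_add_le _ _).trans ?_
        rw [abs_neg]
        exact add_le_add h3 h2
      have hGle : ∀ n ω, |M (d n) ω| ≤ G ω := fun n ω => le_ciSup (hbddM ω) n
      have hG0 : ∀ ω, 0 ≤ G ω := fun ω => (abs_nonneg _).trans (hGle 0 ω)
      have hGmeas : Measurable G := by
        refine Measurable.iSup fun n => ?_
        exact ((hM.stronglyAdapted _).mono (ℱ.le _)).measurable.abs
      -- pointwise domination of f
      have hZbound : ∀ ω v, 0 ≤ v → v ≤ s → |Z v ω - z| ≤ lam * s + G ω := by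
        intro ω v hv0 hvs
        refine le_of_forall_pos_le_add fun ε hε => ?_
        have hc := (hZcont ω).continuousAt (x := v)
        rw [Metric.continuousAt_iff] at hc
        obtain ⟨δ, hδ0, hδ⟩ := hc ε hε
        obtain ⟨n, hn⟩ := hddense v hv0 hvs δ hδ0
        have h1 : |Z (d n) ω - Z v ω| < ε := by
          have := hδ (x := d n) (by rwa [Real.dist_eq])
          rwa [Real.dist_eq] at this
        have h2 : |Z (d n) ω - z| ≤ lam * s + G ω := by
          have hdn := hdmem n
          have hdec := hZdecomp (d n) hdn.1 ω
          have hIb := hI' (d n) hdn.1 hdn.2 ω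
          have heq : Z (d n) ω - z = (∫ u in (0:ℝ)..d n, β u ω) + M (d n) ω := by linarith
          rw [heq]
          exact (abs_add_le _ _).trans (add_le_add hIb (hGle n ω))
        calc |Z v ω - z| ≤ |Z v ω - Z (d n) ω| + |Z (d n) ω - z| := abs_sub_le _ _ _
          _ ≤ ε + (lam * s + G ω) := add_le_add (by rw [abs_sub_comm]; exact h1.le) h2
          _ = lam * s + G ω + ε := by ring
      have hfbound : ∀ ω, f ω ≤ min 1 (lam * s + G ω) := by
        intro ω
        refine ciSup_le fun t => ?_
        refine le_min (htermle1 ω t) ?_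
        have hu0 : 0 ≤ min (t : ℝ) (τ ω) := le_min t.2.1 (hτ0 ω)
        have hus : min (t : ℝ) (τ ω) ≤ s := le_trans (min_le_left _ _) t.2.2
        have h1 : |Real.sqrt (Z (min (t : ℝ) (τ ω)) ω) - Real.sqrt z| ^ 2
            ≤ |Z (min (t : ℝ) (τ ω)) ω - z| := aux_sqrt_sq_le (hZnn _ ω) hz0
        exact h1.trans (hZbound ω _ hu0 hus)
      -- integrate the bound
      have hminbig_int : Integrable (fun ω => min 1 (lam * s + G ω)) P := by
        refine Integrable.mono' (integrable_const 1)
          (measurable_const.min ((measurable_const.add hGmeas))).aestronglyMeasurable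
          (Filter.Eventually.of_forall fun ω => ?_)
        rw [Real.norm_eq_abs, abs_le]
        have h0 : (0:ℝ) ≤ min 1 (lam * s + G ω) :=
          le_min zero_le_one (by nlinarith [hG0 ω, hRHS0.1])
        exact ⟨by linarith, min_le_left _ _⟩
      have hminG_int : Integrable (fun ω => min 1 (G ω)) P := by
        refine Integrable.mono' (integrable_const 1)
          (measurable_const.min hGmeas).aestronglyMeasurable
          (Filter.Eventually.of_forall fun ω => ?_)
        rw [Real.norm_eq_abs, abs_le]
        have h0 : (0:ℝ) ≤ min 1 (G ω) := le_min zero_le_one (hG0 ω)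
        exact ⟨by linarith, min_le_left _ _⟩
      have step1 : (∫ ω, f ω ∂P) ≤ ∫ ω, min 1 (lam * s + G ω) ∂P :=
        integral_mono hint hminbig_int hfbound
      have step2 : ∀ ω, min 1 (lam * s + G ω) ≤ lam * s + min 1 (G ω) := by
        intro ω
        rcases le_total 1 (G ω) with h | h
        · rw [min_eq_left h]
          have h1 : min 1 (lam * s + G ω) ≤ 1 := min_le_left _ _
          linarith [hRHS0.1]
        · rw [min_eq_right h]
          exact min_le_right _ _
      have step3 : (∫ ω, min 1 (lam * s + G ω) ∂P) ≤ lam * s + ∫ ω, min 1 (G ω) ∂P := by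
        calc (∫ ω, min 1 (lam * s + G ω) ∂P)
            ≤ ∫ ω, (lam * s + min 1 (G ω)) ∂P :=
              integral_mono hminbig_int ((integrable_const _).add hminG_int) step2
          _ = lam * s + ∫ ω, min 1 (G ω) ∂P := by
              rw [integral_add (integrable_const _) hminG_int, integral_const]
              simp
      have hcore := aux_core P ℱ Z M α β z lam hlam hz0 hz2 hZcont hZnn hβ hα hZdecomp
        hM hN hM0 hs hs1 d hdmem
      have hsqrt : 2 * Real.sqrt (3 * lam ^ 2 * s) ≤ 4 * lam * Real.sqrt s := by
        have h1 : Real.sqrt (3 * lam ^ 2 * s) ≤ Real.sqrt ((2 * lam) ^ 2 * s) :=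
          Real.sqrt_le_sqrt (by nlinarith)
        have h2 : Real.sqrt ((2 * lam) ^ 2 * s) = 2 * lam * Real.sqrt s := by
          rw [Real.sqrt_mul (sq_nonneg _) s, Real.sqrt_sq (by linarith : (0:ℝ) ≤ 2 * lam)]
        linarith
      linarith [step1, step3, hcore, hsqrt]
  · -- non-integrable case : the integral is zero
    rw [hfdef] at hint ⊢
    rw [integral_undef hint]
    linarith [hRHS0.1, hRHS0.2]
end

section
/- Let Z be a nonnegative continuous semimartingale with dZ_t = β_t dt + α_t √(Z_t) dB_t, Z₀ = z ≥ 0, where |β_t| ≤ λ and λ^{−1} ≤ |α_t|² ≤ λ for λ ≥ 1. For every ε ∈ (0,1) and c > 0 there exists κ = κ(ε, c, λ) ∈ (0,1) such that for all z ≥ 0 and ρ ∈ (0,1], ℙ[sup_{0 ≤ t ≤ κρ²} |√(Z_t) − √z| ≥ cρ] ≤ ε. -/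
open MeasureTheory Real Set Filter Topology
open scoped ENNReal NNReal

section SqrtProcessAux

variable {Ω : Type} {mΩ : MeasurableSpace Ω} {P : Measure Ω} [IsProbabilityMeasure P]
  {ℱ : Filtration ℝ mΩ} {M : ℝ → Ω → ℝ}


lemma mart_integral_eq (hM : Martingale M ℱ P) {s t : ℝ} (hst : s ≤ t) :
    ∫ ω, M t ω ∂P = ∫ ω, M s ω ∂P := by
  have h := hM.2 s t hst
  have h2 := integral_condExp (ℱ.le s) (μ := P) (f := M t)
  rw [← h2]
  exact integral_congr_ae h

lemma sq_submart (hM : Martingale M ℱ P) {s t : ℝ} (hst : s ≤ t)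
    (hs2 : Integrable (fun ω => (M s ω)^2) P) (ht2 : Integrable (fun ω => (M t ω)^2) P) :
    (fun ω => (M s ω)^2) ≤ᵐ[P] P[fun ω => (M t ω)^2|ℱ s] := by
  set m := ℱ s
  have hm : m ≤ mΩ := ℱ.le s
  have hMs : StronglyMeasurable[m] (M s) := hM.stronglyAdapted s
  have hMsi : Integrable (M s) P := hM.integrable s
  have hMti : Integrable (M t) P := hM.integrable t
  have hprod : Integrable (fun ω => (2 * M s ω) * M t ω) P := by
    refine (hs2.add ht2).mono' ?_ ?_
    · exact ((hMsi.aestronglyMeasurable.const_mul 2).mul hMti.aestronglyMeasurable)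
    · refine Eventually.of_forall fun ω => ?_
      have := abs_nonneg (M s ω * M t ω)
      simp only [norm_mul, Real.norm_eq_abs, Pi.add_apply, abs_two]
      nlinarith [sq_nonneg (|M s ω| - |M t ω|), sq_abs (M s ω), sq_abs (M t ω)]
  have hdiff : Integrable (fun ω => (M t ω)^2 - (2 * M s ω) * M t ω) P := ht2.sub hprod
  have hkey : (0:Ω → ℝ) ≤ᵐ[P] P[fun ω => (M t ω - M s ω)^2|m] :=
    condExp_nonneg (Eventually.of_forall fun ω => sq_nonneg _)
  have heq1 : (fun ω => (M t ω - M s ω)^2)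
      = fun ω => ((M t ω)^2 - (2 * M s ω) * M t ω) + (M s ω)^2 := by
    funext ω; ring
  have h2 : P[fun ω => (M t ω - M s ω)^2|m]
      =ᵐ[P] P[fun ω => (M t ω)^2 - (2 * M s ω) * M t ω|m] + P[fun ω => (M s ω)^2|m] := by
    rw [heq1]; exact condExp_add hdiff hs2 m
  have h3 : P[fun ω => (M t ω)^2 - (2 * M s ω) * M t ω|m]
      =ᵐ[P] P[fun ω => (M t ω)^2|m] - P[fun ω => (2 * M s ω) * M t ω|m] :=
    condExp_sub ht2 hprod m
  have h4 : P[fun ω => (2 * M s ω) * M t ω|m] =ᵐ[P] fun ω => (2 * M s ω) * (P[M t|m]) ω := by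
    have := condExp_mul_of_stronglyMeasurable_left (μ := P) (m := m) (hMs.const_mul 2)
      (by simpa [Pi.mul_def] using hprod) hMti
    simpa [Pi.mul_def] using this
  have h5 : P[M t|m] =ᵐ[P] M s := hM.2 s t hst
  have h6 : P[fun ω => (M s ω)^2|m] = fun ω => (M s ω)^2 :=
    condExp_of_stronglyMeasurable hm (hMs.pow 2) hs2
  filter_upwards [hkey, h2, h3, h4, h5] with ω h0 he2 he3 he4 he5
  have he2' : (0:ℝ) ≤ (P[fun ω => (M t ω)^2 - (2 * M s ω) * M t ω|m]) ω
      + (P[fun ω => (M s ω)^2|m]) ω := by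
    have : (0:ℝ) ≤ (P[fun ω => (M t ω - M s ω)^2|m]) ω := h0
    rw [he2] at this; simpa using this
  rw [he3] at he2'
  simp only [Pi.sub_apply, h6, he4, he5] at he2'
  linarith [he2']



lemma riemann_tendsto {f : ℝ → ℝ} (hf : Continuous f) {T : ℝ} (hT : 0 ≤ T) :
    Tendsto (fun n : ℕ => ∑ k ∈ Finset.range n, (T / n) * f ((k : ℝ) * T / n))
      atTop (𝓝 (∫ s in (0:ℝ)..T, f s)) := by
  rcases eq_or_lt_of_le hT with h0 | hT0
  · simp only [← h0]
    simpa using tendsto_const_nhds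
  rw [Metric.tendsto_atTop]
  intro ε hε
  have hTT : 0 < ε / (T + 1) := by positivity
  obtain ⟨δ, hδ0, hδ⟩ := Metric.uniformContinuousOn_iff.1
    ((isCompact_Icc (a := (0:ℝ)) (b := T)).uniformContinuousOn_of_continuous
      hf.continuousOn) (ε / (T + 1)) hTT
  obtain ⟨N, hN⟩ := exists_nat_gt (T / δ)
  refine ⟨N + 1, fun n hn => ?_⟩
  have hn0 : 0 < n := lt_of_lt_of_le (Nat.succ_pos N) hn
  have hnR : (0:ℝ) < n := by exact_mod_cast hn0
  set a : ℕ → ℝ := fun k => (k : ℝ) * T / n with ha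
  have hmesh : T / n < δ := by
    rw [div_lt_iff₀ hnR]
    have h1 : T / δ < (n : ℝ) := lt_of_lt_of_le hN (by exact_mod_cast le_trans (Nat.le_succ N) hn)
    rw [div_lt_iff₀ hδ0] at h1
    linarith
  have hak : ∀ k : ℕ, k ≤ n → a k ∈ Icc (0:ℝ) T := by
    intro k hk
    have hkR : (k : ℝ) ≤ n := by exact_mod_cast hk
    constructor
    · have : (0:ℝ) ≤ (k : ℝ) * T / n := by positivity
      simpa [ha] using this
    · rw [ha, div_le_iff₀ hnR]
      nlinarith
  have hstep : ∀ k : ℕ, a (k + 1) - a k = T / n := by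
    intro k; rw [ha]; push_cast; ring
  have hmono : ∀ k : ℕ, a k ≤ a (k + 1) := by
    intro k
    have := hstep k
    have h2 : 0 ≤ T / n := by positivity
    linarith
  have hint : ∀ k : ℕ, IntervalIntegrable f MeasureTheory.volume (a k) (a (k + 1)) :=
    fun k => hf.intervalIntegrable _ _
  have hsplit : ∑ k ∈ Finset.range n, ∫ s in a k..a (k + 1), f s = ∫ s in (0:ℝ)..T, f s := by
    have h := intervalIntegral.sum_integral_adjacent_intervals (μ := MeasureTheory.volume)
      (f := f) (a := a) (n := n) (fun k _ => hint k)
    have ha0 : a 0 = 0 := by simp [ha]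
    have han : a n = T := by rw [ha]; field_simp
    rw [ha0, han] at h
    exact h
  rw [Real.dist_eq]
  have hdiff : (∑ k ∈ Finset.range n, (T / n) * f (a k)) - ∫ s in (0:ℝ)..T, f s
      = ∑ k ∈ Finset.range n, ((T / n) * f (a k) - ∫ s in a k..a (k + 1), f s) := by
    rw [Finset.sum_sub_distrib, hsplit]
  rw [hdiff]
  have hterm : ∀ k ∈ Finset.range n,
      |(T / n) * f (a k) - ∫ s in a k..a (k + 1), f s| ≤ (ε / (T + 1)) * (T / n) := by
    intro k hk
    have hk' : k < n := Finset.mem_range.1 hk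
    have hcst : (T / n) * f (a k) = ∫ _ in a k..a (k + 1), f (a k) := by
      rw [intervalIntegral.integral_const, hstep k, smul_eq_mul]
    rw [hcst, ← intervalIntegral.integral_sub (intervalIntegrable_const) (hint k)]
    have hb := intervalIntegral.norm_integral_le_of_norm_le_const (C := ε / (T + 1))
      (f := fun s => f (a k) - f s) (a := a k) (b := a (k + 1)) ?_
    · rw [Real.norm_eq_abs] at hb
      have : |a (k + 1) - a k| = T / n := by
        rw [hstep k]; exact abs_of_nonneg (by positivity)
      rw [this] at hb
      exact hb
    · intro x hx
      rw [Set.uIoc_of_le (hmono k)] at hx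
      have hx1 : a k < x := hx.1
      have hx2 : x ≤ a (k + 1) := hx.2
      have hxI : x ∈ Icc (0:ℝ) T :=
        ⟨le_trans (hak k hk'.le).1 hx1.le, le_trans hx2 (hak (k + 1) hk').2⟩
      have hdist : dist (a k) x < δ := by
        rw [Real.dist_eq, abs_of_nonpos (by linarith)]
        have := hstep k
        linarith [hmesh]
      have := hδ (a k) (hak k hk'.le) x hxI hdist
      rw [Real.dist_eq] at this
      exact (le_of_lt this).trans (le_refl _) |>.trans_eq rfl |>.trans (le_refl _) |> fun h => by
        simpa [Real.norm_eq_abs] using h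
  calc |∑ k ∈ Finset.range n, ((T / n) * f (a k) - ∫ s in a k..a (k + 1), f s)|
      ≤ ∑ k ∈ Finset.range n, |(T / n) * f (a k) - ∫ s in a k..a (k + 1), f s| :=
        Finset.abs_sum_le_sum_abs _ _
    _ ≤ ∑ _k ∈ Finset.range n, (ε / (T + 1)) * (T / n) := Finset.sum_le_sum hterm
    _ = (n : ℝ) * ((ε / (T + 1)) * (T / n)) := by
        rw [Finset.sum_const, Finset.card_range, nsmul_eq_mul]
    _ = ε * (T / (T + 1)) := by field_simp
    _ < ε := by
        have h1 : T / (T + 1) < 1 := by rw [div_lt_one (by linarith)]; linarith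
        nlinarith


lemma m2_bound {Z : ℝ → Ω → ℝ} {α β : ℝ → Ω → ℝ} {z lam : ℝ}
    (hlam : 1 ≤ lam)
    (hZcont : ∀ ω, Continuous fun t => Z t ω)
    (hZpos : ∀ t ω, 0 ≤ Z t ω)
    (hβ : ∀ t ω, |β t ω| ≤ lam)
    (hα : ∀ t ω, |α t ω| ^ 2 ≤ lam)
    (hz : 0 ≤ z)
    (hZeq : ∀ t, 0 ≤ t → ∀ ω, Z t ω = z + (∫ s in (0:ℝ)..t, β s ω) + M t ω)
    (hM : Martingale M ℱ P)
    (hN : Martingale (fun t ω => (M t ω) ^ 2 - ∫ s in (0:ℝ)..t, (α s ω) ^ 2 * Z s ω) ℱ P)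
    (hM0 : ∀ ω, M 0 ω = 0)
    {T : ℝ} (hT : 0 ≤ T) :
    Integrable (fun ω => (M T ω) ^ 2) P ∧
      ∫ ω, (M T ω) ^ 2 ∂P ≤ lam * T * (z + lam * T) := by
  have hlam0 : (0:ℝ) < lam := lt_of_lt_of_le one_pos hlam
  have hI : ∀ t, 0 ≤ t → ∀ ω, |∫ s in (0:ℝ)..t, β s ω| ≤ lam * t := by
    intro t ht ω
    have h := intervalIntegral.norm_integral_le_of_norm_le_const (C := lam)
      (f := fun s => β s ω) (a := 0) (b := t) (fun x _ => by
        simpa [Real.norm_eq_abs] using hβ x ω)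
    simpa [Real.norm_eq_abs, abs_of_nonneg ht] using h
  have hMlb : ∀ t, 0 ≤ t → ∀ ω, -(z + lam * t) ≤ M t ω := by
    intro t ht ω
    have h1 := hZeq t ht ω
    have h2 := hZpos t ω
    have h3 := abs_le.1 (hI t ht ω)
    linarith [h3.1, h3.2]
  have hZub : ∀ t, 0 ≤ t → ∀ ω, Z t ω ≤ z + lam * t + M t ω := by
    intro t ht ω
    have h1 := hZeq t ht ω
    have h3 := abs_le.1 (hI t ht ω)
    linarith [h3.2]
  have hEM : ∀ t, 0 ≤ t → ∫ ω, M t ω ∂P = 0 := by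
    intro t ht
    rw [mart_integral_eq hM ht]
    simp [hM0]
  set A : Ω → ℝ := fun ω => ∫ s in (0:ℝ)..T, (α s ω) ^ 2 * Z s ω with hA
  have hA0 : ∀ ω, 0 ≤ A ω := fun ω =>
    intervalIntegral.integral_nonneg hT (fun s _ => mul_nonneg (sq_nonneg _) (hZpos s ω))
  have hAle : ∀ ω, A ω ≤ lam * ∫ s in (0:ℝ)..T, Z s ω := by
    intro ω
    have hZint : IntervalIntegrable (fun s => Z s ω) MeasureTheory.volume 0 T :=
      (hZcont ω).intervalIntegrable _ _
    have hZI0 : 0 ≤ ∫ s in (0:ℝ)..T, Z s ω :=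
      intervalIntegral.integral_nonneg hT fun s _ => hZpos s ω
    by_cases hint : IntervalIntegrable (fun s => (α s ω) ^ 2 * Z s ω) MeasureTheory.volume 0 T
    · have h1 : A ω ≤ ∫ s in (0:ℝ)..T, lam * Z s ω := by
        refine intervalIntegral.integral_mono_on hT hint (hZint.const_mul lam) (fun s _ => ?_)
        have h2 := hα s ω
        have h3 := hZpos s ω
        nlinarith [sq_abs (α s ω)]
      rwa [intervalIntegral.integral_const_mul] at h1
    · have h1 : A ω = 0 := by
        simp only [hA]
        exact intervalIntegral.integral_undef hint
      rw [h1]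
      exact mul_nonneg hlam0.le hZI0
  set K : ℝ := lam * T * (z + lam * T) with hK
  have hK0 : 0 ≤ K := by positivity
  set D : ℕ → Ω → ℝ := fun n ω => ∑ k ∈ Finset.range n,
      (T / n) * (lam * (z + lam * ((k : ℝ) * T / (n:ℝ)) + M ((k : ℝ) * T / (n:ℝ)) ω)) with hD
  have htk0 : ∀ (n k : ℕ), 0 ≤ (k : ℝ) * T / (n:ℝ) := fun n k => by positivity
  have htkT : ∀ (n : ℕ), ∀ k ∈ Finset.range n, (k : ℝ) * T / (n:ℝ) ≤ T := by
    intro n k hk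
    have h0 : 0 < n := lt_of_le_of_lt (Nat.zero_le k) (Finset.mem_range.1 hk)
    have hn : (0:ℝ) < n := by exact_mod_cast h0
    have hkn : (k:ℝ) ≤ n := by exact_mod_cast (Finset.mem_range.1 hk).le
    rw [div_le_iff₀ hn]
    nlinarith
  have hDnn : ∀ n ω, 0 ≤ D n ω := by
    intro n ω
    refine Finset.sum_nonneg fun k _ => ?_
    have h1 := hMlb _ (htk0 n k) ω
    have h2 : (0:ℝ) ≤ T / n := by positivity
    have h3 : 0 ≤ z + lam * ((k : ℝ) * T / (n:ℝ)) + M ((k : ℝ) * T / (n:ℝ)) ω := by linarith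
    exact mul_nonneg h2 (mul_nonneg hlam0.le h3)
  have hterm_int : ∀ (n : ℕ) (t : ℝ),
      Integrable (fun ω => (T / (n:ℝ)) * (lam * (z + lam * t + M t ω))) P := by
    intro n t
    have h := (integrable_const (μ := P) (z + lam * t)).add (hM.integrable t)
    have h' : Integrable (fun ω => z + lam * t + M t ω) P := by simpa using h
    exact (h'.const_mul lam).const_mul _
  have hDint : ∀ n, Integrable (D n) P := by
    intro n
    simp only [hD]
    exact integrable_finset_sum _ fun k _ => hterm_int n _
  have hED : ∀ n, ∫ ω, D n ω ∂P ≤ K := by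
    intro n
    simp only [hD]
    rw [integral_finset_sum (Finset.range n)
      (f := fun (k : ℕ) (ω : Ω) => (T / (n:ℝ)) * (lam * (z + lam * ((k : ℝ) * T / (n:ℝ))
        + M ((k : ℝ) * T / (n:ℝ)) ω)))
      (fun k _ => hterm_int n _)]
    have heach : ∀ k ∈ Finset.range n,
        (∫ ω, (T / n) * (lam * (z + lam * ((k : ℝ) * T / (n:ℝ))
            + M ((k : ℝ) * T / (n:ℝ)) ω)) ∂P)
          ≤ (T / n) * (lam * (z + lam * T)) := by
      intro k hk
      rw [integral_const_mul, integral_const_mul,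
        integral_add (integrable_const _) (hM.integrable _), integral_const,
        hEM _ (htk0 n k)]

      simp only [measure_univ, probReal_univ, ENNReal.toReal_one, smul_eq_mul, one_mul, add_zero]
      have h1 := htkT n k hk
      have h2 : (0:ℝ) ≤ T / n := by positivity
      nlinarith [mul_le_mul_of_nonneg_left h1 (mul_nonneg (mul_nonneg h2 hlam0.le) hlam0.le)]
    calc (∑ k ∈ Finset.range n, ∫ ω, (T / n) * (lam * (z + lam * ((k : ℝ) * T / (n:ℝ))
            + M ((k : ℝ) * T / (n:ℝ)) ω)) ∂P)
        ≤ ∑ _k ∈ Finset.range n, (T / n) * (lam * (z + lam * T)) :=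
          Finset.sum_le_sum heach
      _ = (n : ℝ) * ((T / n) * (lam * (z + lam * T))) := by
          rw [Finset.sum_const, Finset.card_range, nsmul_eq_mul]
      _ ≤ K := by
          rcases Nat.eq_zero_or_pos n with h0 | h0
          · subst h0
            simp only [Nat.cast_zero, zero_mul]
            exact hK0
          · have hn : (0:ℝ) < n := by exact_mod_cast h0
            have : (n : ℝ) * ((T / n) * (lam * (z + lam * T))) = K := by
              rw [hK]; field_simp
            rw [this]
  have hlD : ∀ n, (∫⁻ ω, ENNReal.ofReal (D n ω) ∂P) ≤ ENNReal.ofReal K := by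
    intro n
    rw [← ofReal_integral_eq_lintegral_ofReal (hDint n) (Eventually.of_forall (hDnn n))]
    exact ENNReal.ofReal_le_ofReal (hED n)
  have hliminf : ∀ ω, ENNReal.ofReal (A ω)
      ≤ liminf (fun n => ENNReal.ofReal (D n ω)) atTop := by
    intro ω
    have h1 : ENNReal.ofReal (A ω) ≤ ENNReal.ofReal (lam * ∫ s in (0:ℝ)..T, Z s ω) :=
      ENNReal.ofReal_le_ofReal (hAle ω)
    have h2 : Tendsto (fun n : ℕ => ENNReal.ofReal
        (lam * ∑ k ∈ Finset.range n, (T / n) * Z ((k : ℝ) * T / (n:ℝ)) ω)) atTop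
        (𝓝 (ENNReal.ofReal (lam * ∫ s in (0:ℝ)..T, Z s ω))) :=
      (ENNReal.continuous_ofReal.tendsto _).comp ((riemann_tendsto (hZcont ω) hT).const_mul lam)
    have h3 : ∀ n : ℕ, ENNReal.ofReal
        (lam * ∑ k ∈ Finset.range n, (T / n) * Z ((k : ℝ) * T / (n:ℝ)) ω)
        ≤ ENNReal.ofReal (D n ω) := by
      intro n
      apply ENNReal.ofReal_le_ofReal
      simp only [hD]
      rw [Finset.mul_sum]
      refine Finset.sum_le_sum fun k _ => ?_
      have h4 := hZub _ (htk0 n k) ω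
      have h5 : (0:ℝ) ≤ T / n := by positivity
      nlinarith [mul_le_mul_of_nonneg_left h4 (mul_nonneg h5 hlam0.le)]
    calc ENNReal.ofReal (A ω) ≤ ENNReal.ofReal (lam * ∫ s in (0:ℝ)..T, Z s ω) := h1
      _ = liminf (fun n : ℕ => ENNReal.ofReal
          (lam * ∑ k ∈ Finset.range n, (T / n) * Z ((k : ℝ) * T / (n:ℝ)) ω)) atTop :=
          h2.liminf_eq.symm
      _ ≤ liminf (fun n => ENNReal.ofReal (D n ω)) atTop :=
          liminf_le_liminf (Eventually.of_forall h3)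
  have hAlint : (∫⁻ ω, ENNReal.ofReal (A ω) ∂P) ≤ ENNReal.ofReal K := by
    calc (∫⁻ ω, ENNReal.ofReal (A ω) ∂P)
        ≤ ∫⁻ ω, liminf (fun n => ENNReal.ofReal (D n ω)) atTop ∂P :=
          lintegral_mono fun ω => hliminf ω
      _ ≤ liminf (fun n => ∫⁻ ω, ENNReal.ofReal (D n ω) ∂P) atTop :=
          lintegral_liminf_le' fun n =>
            (ENNReal.measurable_ofReal.comp_aemeasurable (hDint n).aemeasurable)
      _ ≤ ENNReal.ofReal K := by
          have h := liminf_le_liminf (Eventually.of_forall hlD)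
            (f := atTop) 
          simpa using h
  set Nf : Ω → ℝ := fun ω => (M T ω) ^ 2 - A ω with hNf
  have hNint : Integrable Nf P := hN.integrable T
  have hMTmeas : AEStronglyMeasurable (M T) P := (hM.integrable T).aestronglyMeasurable
  have hM2meas : AEStronglyMeasurable (fun ω => (M T ω) ^ 2) P := hMTmeas.pow 2
  have hAmeas : AEStronglyMeasurable A P := by
    have h : A = fun ω => (M T ω) ^ 2 - Nf ω := by
      funext ω; simp only [hNf]; ring
    rw [h]
    exact hM2meas.sub hNint.aestronglyMeasurable
  have hAint : Integrable A P := by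
    refine ⟨hAmeas, ?_⟩
    rw [hasFiniteIntegral_iff_ofReal (Eventually.of_forall hA0)]
    exact lt_of_le_of_lt hAlint ENNReal.ofReal_lt_top
  have hEA : ∫ ω, A ω ∂P ≤ K := by
    rw [integral_eq_lintegral_of_nonneg_ae (Eventually.of_forall hA0) hAmeas]
    exact ENNReal.toReal_le_of_le_ofReal hK0 hAlint
  have hM2eq : (fun ω => (M T ω) ^ 2) = fun ω => Nf ω + A ω := by
    funext ω; simp only [hNf]; ring
  have hM2int : Integrable (fun ω => (M T ω) ^ 2) P := by
    rw [hM2eq]; exact hNint.add hAint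
  refine ⟨hM2int, ?_⟩
  have hEN : ∫ ω, Nf ω ∂P = 0 := by
    have h := mart_integral_eq hN (s := 0) (t := T) hT
    simp only [hM0, intervalIntegral.integral_same] at h
    simp only [hNf, hA]
    simpa using h
  rw [hM2eq, integral_add hNint hAint, hEN, zero_add]
  exact hEA


lemma doob_finset (hM : Martingale M ℱ P) {T b : ℝ} (hT : 0 ≤ T) (hb : 0 < b)
    (hint : ∀ t, 0 ≤ t → Integrable (fun ω => (M t ω) ^ 2) P)
    (hsub : ∀ s t, 0 ≤ s → s ≤ t →
      (fun ω => (M s ω) ^ 2) ≤ᵐ[P] P[fun ω => (M t ω) ^ 2|ℱ s])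
    (F : Finset ℝ) (hF : ∀ t ∈ F, t ∈ Icc 0 T) :
    ENNReal.ofReal (b ^ 2) * P {ω | ∃ t ∈ F, b ≤ |M t ω|}
      ≤ ENNReal.ofReal (∫ ω, (M T ω) ^ 2 ∂P) := by
  classical
  set l : List ℝ := (insert T F).sort (· ≤ ·) with hl
  set n : ℕ := l.length with hn
  set τ : ℕ → ℝ := fun k => l.getD k T with hτ
  have hmem : ∀ x ∈ l, x ∈ Icc (0:ℝ) T := by
    intro x hx
    have : x ∈ insert T F := (Finset.mem_sort (α := ℝ) (· ≤ ·)).1 hx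
    rcases Finset.mem_insert.1 this with h | h
    · rw [h]; exact ⟨hT, le_refl T⟩
    · exact hF x h
  have hτmem : ∀ k, τ k ∈ Icc (0:ℝ) T := by
    intro k
    by_cases h : k < l.length
    · have : τ k = l.get ⟨k, h⟩ := by simp [hτ, List.getD_eq_getElem?_getD, List.getElem?_eq_getElem h]
      rw [this]
      exact hmem _ (List.get_mem l _)
    · have : τ k = T := by simp [hτ, List.getD_eq_getElem?_getD, List.getElem?_eq_none (le_of_not_gt h)]
      rw [this]
      exact ⟨hT, le_refl T⟩
  have hsorted : l.Pairwise (· ≤ ·) := Finset.pairwise_sort _ _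
  have hτmono : Monotone τ := by
    intro i j hij
    by_cases hj : j < l.length
    · have hi : i < l.length := lt_of_le_of_lt hij hj
      have h1 : τ i = l.get ⟨i, hi⟩ := by simp [hτ, List.getD_eq_getElem?_getD, List.getElem?_eq_getElem hi]
      have h2 : τ j = l.get ⟨j, hj⟩ := by simp [hτ, List.getD_eq_getElem?_getD, List.getElem?_eq_getElem hj]
      rw [h1, h2]
      exact hsorted.rel_get_of_le hij
    · have h2 : τ j = T := by simp [hτ, List.getD_eq_getElem?_getD, List.getElem?_eq_none (le_of_not_gt hj)]
      rw [h2]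
      exact (hτmem i).2
  have hτn : τ n = T := by
    simp [hτ, hn, List.getD_eq_getElem?_getD, List.getElem?_eq_none (le_refl l.length)]
  set 𝒢 : Filtration ℕ mΩ :=
    { seq := fun k => ℱ (τ k)
      mono' := fun k j h => ℱ.mono (hτmono h)
      le' := fun k => ℱ.le _ } with h𝒢
  set f : ℕ → Ω → ℝ := fun k ω => (M (τ k) ω) ^ 2 with hf
  have hfsub : Submartingale f 𝒢 P := by
    refine submartingale_nat (fun k => ?_) (fun k => hint _ (hτmem k).1) (fun k => ?_)
    · exact (hM.stronglyAdapted (τ k)).pow 2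
    · exact hsub (τ k) (τ (k + 1)) (hτmem k).1 (hτmono (Nat.le_succ k))
  have hnonneg : (0 : ℕ → Ω → ℝ) ≤ f := fun k ω => sq_nonneg _
  set ε : NNReal := ⟨b ^ 2, sq_nonneg b⟩ with hε
  have hcoe : (ε : ℝ) = b ^ 2 := rfl
  have hdoob := maximal_ineq hfsub hnonneg (ε := ε) n
  set U : Set Ω := {ω | (ε : ℝ) ≤ (Finset.range (n + 1)).sup' Finset.nonempty_range_add_one
      fun k => f k ω} with hU
  have hsubU : {ω | ∃ t ∈ F, b ≤ |M t ω|} ⊆ U := by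
    intro ω hω
    obtain ⟨t, htF, hbt⟩ := hω
    have htl : t ∈ l := (Finset.mem_sort (α := ℝ) (· ≤ ·)).2 (Finset.mem_insert_of_mem htF)
    obtain ⟨k, hk⟩ := List.mem_iff_get.1 htl
    have hksucc : (k : ℕ) ∈ Finset.range (n + 1) :=
      Finset.mem_range.2 (lt_of_lt_of_le k.isLt (Nat.le_succ n))
    have hτk : τ k = t := by
      simp only [hτ, List.getD_eq_getElem?_getD, List.getElem?_eq_getElem k.isLt,
        Option.getD_some]
      exact hk
    have hfk : b ^ 2 ≤ f k ω := by
      rw [hf]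
      simp only [hτk]
      calc b ^ 2 ≤ |M t ω| ^ 2 := by
            have := sq_le_sq' (by linarith [abs_nonneg (M t ω)]) hbt
            nlinarith [abs_nonneg (M t ω), hb.le]
        _ = (M t ω) ^ 2 := sq_abs _
    rw [hU]
    exact le_trans hfk (Finset.le_sup' (fun k => f k ω) hksucc)
  have hPU : P {ω | ∃ t ∈ F, b ≤ |M t ω|} ≤ P U := measure_mono hsubU
  have hRHS : ENNReal.ofReal (∫ ω in U, f n ω ∂P) ≤ ENNReal.ofReal (∫ ω, (M T ω) ^ 2 ∂P) := by
    apply ENNReal.ofReal_le_ofReal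
    have h1 : ∫ ω in U, f n ω ∂P ≤ ∫ ω, f n ω ∂P :=
      setIntegral_le_integral (hfsub.integrable n) (Eventually.of_forall fun ω => hnonneg n ω)
    rw [hf] at h1 ⊢
    simpa [hτn] using h1
  calc ENNReal.ofReal (b ^ 2) * P {ω | ∃ t ∈ F, b ≤ |M t ω|}
      ≤ (ε : ℝ≥0∞) * P U := by
        rw [show ENNReal.ofReal (b ^ 2) = (ε : ℝ≥0∞) by
          rw [hε]; simp [ENNReal.ofReal, Real.toNNReal, sq_nonneg b]; rfl]
        exact mul_le_mul_right hPU _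
    _ ≤ ENNReal.ofReal (∫ ω in U, f n ω ∂P) := by
        have := hdoob
        simpa [smul_eq_mul] using this
    _ ≤ ENNReal.ofReal (∫ ω, (M T ω) ^ 2 ∂P) := hRHS


end SqrtProcessAux

lemma key_arith {lam ε c ρ z κ : ℝ} (hlam : 1 ≤ lam) (hε0 : 0 < ε) (hε1 : ε < 1)
    (hc : 0 < c) (hρ0 : 0 < ρ) (hz : 0 ≤ z)
    (hκle : κ ≤ ε * c ^ 2 / (128 * lam)) (hκ0 : 0 < κ) :
    lam * (κ * ρ ^ 2) * (z + lam * (κ * ρ ^ 2))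
      ≤ ε * (c * ρ * (c * ρ + Real.sqrt z) / 8) ^ 2 := by
  have hlam0 : (0:ℝ) < lam := lt_of_lt_of_le one_pos hlam
  have hsz : 0 ≤ Real.sqrt z := Real.sqrt_nonneg z
  have hcρ : 0 < c * ρ := mul_pos hc hρ0
  have hlκ : lam * κ ≤ ε * c ^ 2 / 128 := by
    have h1 := mul_le_mul_of_nonneg_left hκle hlam0.le
    have h2 : lam * (ε * c ^ 2 / (128 * lam)) = ε * c ^ 2 / 128 := by
      field_simp
    linarith [h1, h2.le, h2.ge]
  set u : ℝ := lam * (κ * ρ ^ 2) with hu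
  have hu0 : 0 ≤ u := by positivity
  have hu1 : u ≤ ε * c ^ 2 * ρ ^ 2 / 128 := by
    have := mul_le_mul_of_nonneg_right hlκ (sq_nonneg ρ)
    calc u = lam * κ * ρ ^ 2 := by rw [hu]; ring
      _ ≤ ε * c ^ 2 / 128 * ρ ^ 2 := this
      _ = ε * c ^ 2 * ρ ^ 2 / 128 := by ring
  have hu2 : u ≤ c ^ 2 * ρ ^ 2 := by
    have h2 : ε * c ^ 2 * ρ ^ 2 / 128 ≤ c ^ 2 * ρ ^ 2 := by
      nlinarith [mul_nonneg (sq_nonneg c) (sq_nonneg ρ)]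
    linarith
  have hbsq : (c * ρ * (c * ρ + Real.sqrt z) / 8) ^ 2
      = c ^ 2 * ρ ^ 2 * (c * ρ + Real.sqrt z) ^ 2 / 64 := by ring
  have hcross : c ^ 2 * ρ ^ 2 + z ≤ (c * ρ + Real.sqrt z) ^ 2 := by
    nlinarith [mul_nonneg hcρ.le hsz, Real.sq_sqrt hz]
  have hmul1 := mul_le_mul_of_nonneg_right hu1 hz
  have hmul2 := mul_le_mul hu1 hu2 hu0 (by positivity)
  have hmul3 := mul_le_mul_of_nonneg_left hcross
    (by positivity : (0:ℝ) ≤ ε * (c ^ 2 * ρ ^ 2) / 64)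
  have hmul4 : ε * (c * ρ * (c * ρ + Real.sqrt z) / 8) ^ 2
      = ε * (c ^ 2 * ρ ^ 2) / 64 * (c * ρ + Real.sqrt z) ^ 2 := by rw [hbsq]; ring
  have hexp : u * (z + u) = u * z + u * u := by ring
  rw [hexp]
  nlinarith [hmul1, hmul2, hmul3, hmul4]

/-- Lemma 3.1(a): modulus-of-continuity estimate for the general squared Bessel
process `dZ_t = β_t dt + α_t √Z_t dB_t`, encoded by `Z_t = z + ∫₀ᵗ β_s ds + M_t`
with `M` a martingale whose quadratic variation is `∫₀ᵗ α_s² Z_s ds`. -/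
theorem sqrt_process_modulus (lam : ℝ) (hlam : 1 ≤ lam)
    (ε c : ℝ) (hε : ε ∈ Set.Ioo (0:ℝ) 1) (hc : 0 < c) :
    ∃ κ ∈ Set.Ioo (0:ℝ) 1, ∀ {Ω : Type} {mΩ : MeasurableSpace Ω} (P : Measure Ω),
      IsProbabilityMeasure P → ∀ (ℱ : Filtration ℝ mΩ)
      (Z M : ℝ → Ω → ℝ) (α β : ℝ → Ω → ℝ) (z ρ : ℝ),
      (0 ≤ z) → (ρ ∈ Set.Ioc (0:ℝ) 1) →
      (∀ ω, Continuous fun t => Z t ω) →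
      (∀ t ω, 0 ≤ Z t ω) →
      (∀ t ω, |β t ω| ≤ lam) →
      (∀ t ω, lam⁻¹ ≤ |α t ω| ^ 2 ∧ |α t ω| ^ 2 ≤ lam) →
      (∀ t, 0 ≤ t → ∀ ω, Z t ω = z + (∫ s in (0:ℝ)..t, β s ω) + M t ω) →
      Martingale M ℱ P →
      Martingale (fun t ω => (M t ω) ^ 2 - ∫ s in (0:ℝ)..t, (α s ω) ^ 2 * Z s ω) ℱ P →
      (∀ ω, M 0 ω = 0) →
      P {ω | ∃ t ∈ Set.Icc (0:ℝ) (κ * ρ ^ 2),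
          c * ρ ≤ |Real.sqrt (Z t ω) - Real.sqrt z|}
        ≤ ENNReal.ofReal ε := by
  obtain ⟨hε0, hε1⟩ := hε
  have hlam0 : (0:ℝ) < lam := lt_of_lt_of_le one_pos hlam
  set κ : ℝ := min (1/2) (ε * c ^ 2 / (128 * lam)) with hκdef
  have hκ0 : 0 < κ := lt_min (by norm_num) (by positivity)
  have hκ1 : κ < 1 := lt_of_le_of_lt (min_le_left _ _) (by norm_num)
  have hκle : κ ≤ ε * c ^ 2 / (128 * lam) := min_le_right _ _
  clear_value κ
  refine ⟨κ, ⟨hκ0, hκ1⟩, ?_⟩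
  intro Ω mΩ P hP ℱ Z M α β z ρ hz hρ hZcont hZpos hβ hα' hZeq hMart hNmart hM0
  haveI := hP
  obtain ⟨hρ0, hρ1⟩ := hρ
  have hα : ∀ t ω, |α t ω| ^ 2 ≤ lam := fun t ω => (hα' t ω).2
  set T : ℝ := κ * ρ ^ 2 with hTdef
  have hT0 : 0 ≤ T := by rw [hTdef]; positivity
  clear_value T
  have hsz : 0 ≤ Real.sqrt z := Real.sqrt_nonneg z
  have hcρ : 0 < c * ρ := mul_pos hc hρ0
  set b : ℝ := c * ρ * (c * ρ + Real.sqrt z) / 8 with hbdef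
  have hb0 : 0 < b := by rw [hbdef]; positivity
  clear_value b
  -- second moment facts
  have hm2 := fun (t : ℝ) (ht : 0 ≤ t) =>
    m2_bound hlam hZcont hZpos hβ hα hz hZeq hMart hNmart hM0 ht
  have hint : ∀ t, 0 ≤ t → Integrable (fun ω => (M t ω) ^ 2) P := fun t ht => (hm2 t ht).1
  have hsub : ∀ s t, 0 ≤ s → s ≤ t →
      (fun ω => (M s ω) ^ 2) ≤ᵐ[P] P[fun ω => (M t ω) ^ 2|ℱ s] :=
    fun s t hs hst => sq_submart hMart hst (hint s hs) (hint t (hs.trans hst))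
  -- drift bound
  have hI : ∀ t, 0 ≤ t → ∀ ω, |∫ s in (0:ℝ)..t, β s ω| ≤ lam * t := by
    intro t ht ω
    have h := intervalIntegral.norm_integral_le_of_norm_le_const (C := lam)
      (f := fun s => β s ω) (a := 0) (b := t) (fun x _ => by
        simpa [Real.norm_eq_abs] using hβ x ω)
    simpa [Real.norm_eq_abs, abs_of_nonneg ht] using h
  -- lam * T ≤ b
  have hlκ : lam * κ ≤ ε * c ^ 2 / 128 := by
    have h1 := mul_le_mul_of_nonneg_left hκle hlam0.le
    have h2 : lam * (ε * c ^ 2 / (128 * lam)) = ε * c ^ 2 / 128 := by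
      field_simp
    linarith [h1, h2.le, h2.ge]
  have hlT : lam * T ≤ b := by
    rw [hTdef, hbdef]
    have hρ2 : 0 ≤ ρ ^ 2 := sq_nonneg ρ
    have h1 := mul_le_mul_of_nonneg_right hlκ hρ2
    have h2 : ε * c ^ 2 / 128 * ρ ^ 2 ≤ c ^ 2 * ρ ^ 2 / 128 := by
      nlinarith [mul_nonneg (sq_nonneg c) hρ2]
    have h3 : c ^ 2 * ρ ^ 2 / 128 ≤ c * ρ * (c * ρ + Real.sqrt z) / 8 := by
      nlinarith [mul_nonneg hcρ.le hsz, sq_nonneg (c * ρ)]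
    calc lam * (κ * ρ ^ 2) = lam * κ * ρ ^ 2 := by ring
      _ ≤ ε * c ^ 2 / 128 * ρ ^ 2 := h1
      _ ≤ c ^ 2 * ρ ^ 2 / 128 := h2
      _ ≤ c * ρ * (c * ρ + Real.sqrt z) / 8 := h3
  -- event inclusion into rational event
  set S : Set Ω := {ω | ∃ q : ℚ, ((q : ℝ) ∈ Icc (0:ℝ) T ∧ b ≤ |M (q : ℝ) ω|)} with hSdef
  have hincl : {ω | ∃ t ∈ Set.Icc (0:ℝ) T,
      c * ρ ≤ |Real.sqrt (Z t ω) - Real.sqrt z|} ⊆ S := by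
    rintro ω ⟨t, ⟨ht0, htT⟩, hct⟩
    have hZt := hZpos t ω
    have hst : 0 ≤ Real.sqrt (Z t ω) := Real.sqrt_nonneg _
    have hsq1 : Real.sqrt (Z t ω) ^ 2 = Z t ω := Real.sq_sqrt hZt
    have hsq2 : Real.sqrt z ^ 2 = z := Real.sq_sqrt hz
    have hfac : Z t ω - z
        = (Real.sqrt (Z t ω) - Real.sqrt z) * (Real.sqrt (Z t ω) + Real.sqrt z) := by
      nlinarith [hsq1, hsq2]
    have habs : |Real.sqrt (Z t ω) - Real.sqrt z| ≤ Real.sqrt (Z t ω) + Real.sqrt z :=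
      abs_le.2 ⟨by linarith, by linarith⟩
    have hsum : c * ρ ≤ Real.sqrt (Z t ω) + Real.sqrt z := le_trans hct habs
    have hsum2 : (c * ρ + Real.sqrt z) / 2 ≤ Real.sqrt (Z t ω) + Real.sqrt z := by
      linarith
    have h4b : 4 * b ≤ |Z t ω - z| := by
      rw [hfac, abs_mul, abs_of_nonneg (by linarith :
        (0:ℝ) ≤ Real.sqrt (Z t ω) + Real.sqrt z)]
      calc 4 * b = (c * ρ) * ((c * ρ + Real.sqrt z) / 2) := by rw [hbdef]; ring
        _ ≤ |Real.sqrt (Z t ω) - Real.sqrt z| * (Real.sqrt (Z t ω) + Real.sqrt z) :=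
          mul_le_mul hct hsum2 (by positivity) (abs_nonneg _)
    have ht0' : t ≠ 0 := by
      intro h
      subst h
      have hZ0 : Z 0 ω = z := by
        rw [hZeq 0 le_rfl ω, intervalIntegral.integral_same, hM0]
        ring
      rw [hZ0, sub_self, abs_zero] at hct
      linarith
    have htpos : 0 < t := lt_of_le_of_ne ht0 (Ne.symm ht0')
    have hcont : ContinuousAt (fun u => Z u ω) t := (hZcont ω).continuousAt
    rcases Metric.continuousAt_iff.1 hcont b hb0 with ⟨δ, hδ0, hδ⟩
    have hmax : max 0 (t - δ / 2) < t := max_lt htpos (by linarith)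
    obtain ⟨q, hq1, hq2⟩ := exists_rat_btwn hmax
    have hq0 : (0:ℝ) ≤ (q:ℝ) := le_of_lt (lt_of_le_of_lt (le_max_left _ _) hq1)
    have hqT : (q:ℝ) ≤ T := le_trans hq2.le htT
    have hq3 : t - δ / 2 < (q:ℝ) := lt_of_le_of_lt (le_max_right _ _) hq1
    have hqδ : dist (q:ℝ) t < δ := by
      rw [Real.dist_eq, abs_of_nonpos (by linarith)]
      linarith
    have hZq : |Z (q:ℝ) ω - Z t ω| < b := by
      have := hδ hqδ
      rwa [Real.dist_eq] at this
    have h3b : 3 * b ≤ |Z (q:ℝ) ω - z| := by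
      have htri := abs_sub_le (Z t ω) (Z (q:ℝ) ω) z
      have hcomm : |Z t ω - Z (q:ℝ) ω| = |Z (q:ℝ) ω - Z t ω| := abs_sub_comm _ _
      linarith
    have hIq := abs_le.1 (hI q hq0 ω)
    have h7 : lam * (q:ℝ) ≤ lam * T := mul_le_mul_of_nonneg_left hqT hlam0.le
    have hZeqq := hZeq q hq0 ω
    have htri2 : |Z (q:ℝ) ω - z| ≤ |∫ s in (0:ℝ)..(q:ℝ), β s ω| + |M (q:ℝ) ω| := by
      have h8 : Z (q:ℝ) ω - z = (∫ s in (0:ℝ)..(q:ℝ), β s ω) + M (q:ℝ) ω := by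
        rw [hZeqq]; ring
      rw [h8]
      exact abs_add_le _ _
    have habsI : |∫ s in (0:ℝ)..(q:ℝ), β s ω| ≤ lam * T := le_trans (hI q hq0 ω) h7
    have hMq : b ≤ |M (q:ℝ) ω| := by linarith
    exact ⟨q, ⟨hq0, hqT⟩, hMq⟩
  -- countable union
  obtain ⟨e, he⟩ := exists_surjective_nat ℚ
  set G : ℕ → Set Ω := fun n => {ω | ∃ k, k ≤ n ∧
      ((e k : ℝ) ∈ Icc (0:ℝ) T ∧ b ≤ |M (e k : ℝ) ω|)} with hGdef
  have hGmono : Monotone G := by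
    intro i j hij ω hω
    obtain ⟨k, hk, h⟩ := hω
    exact ⟨k, hk.trans hij, h⟩
  have hSU : S ⊆ ⋃ n, G n := by
    rintro ω ⟨q, hq⟩
    obtain ⟨k, rfl⟩ := he q
    exact Set.mem_iUnion.2 ⟨k, k, le_rfl, hq⟩
  have hkey : lam * T * (z + lam * T) ≤ ε * b ^ 2 := by
    rw [hTdef, hbdef]
    exact key_arith hlam hε0 hε1 hc hρ0 hz hκle hκ0
  have hPG : ∀ n, P (G n) ≤ ENNReal.ofReal ε := by
    intro n
    classical
    set F : Finset ℝ := ((Finset.range (n + 1)).image (fun k => ((e k : ℚ) : ℝ))).filter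
      (fun t => t ∈ Icc (0:ℝ) T) with hFdef
    have hFmem : ∀ t ∈ F, t ∈ Icc (0:ℝ) T := fun t ht => (Finset.mem_filter.1 ht).2
    have h1 : G n ⊆ {ω | ∃ t ∈ F, b ≤ |M t ω|} := by
      rintro ω ⟨k, hk, hmem, hb'⟩
      refine ⟨(e k : ℝ), ?_, hb'⟩
      refine Finset.mem_filter.2 ⟨?_, hmem⟩
      exact Finset.mem_image.2 ⟨k, Finset.mem_range.2 (Nat.lt_succ_of_le hk), rfl⟩
    have hchain : ENNReal.ofReal (b ^ 2) * P (G n)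
        ≤ ENNReal.ofReal (b ^ 2) * ENNReal.ofReal ε := by
      calc ENNReal.ofReal (b ^ 2) * P (G n)
          ≤ ENNReal.ofReal (b ^ 2) * P {ω | ∃ t ∈ F, b ≤ |M t ω|} :=
            mul_le_mul_right (measure_mono h1) _
        _ ≤ ENNReal.ofReal (∫ ω, (M T ω) ^ 2 ∂P) :=
            doob_finset hMart hT0 hb0 hint hsub F hFmem
        _ ≤ ENNReal.ofReal (lam * T * (z + lam * T)) :=
            ENNReal.ofReal_le_ofReal (hm2 T hT0).2
        _ ≤ ENNReal.ofReal (ε * b ^ 2) := ENNReal.ofReal_le_ofReal hkey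
        _ = ENNReal.ofReal (b ^ 2) * ENNReal.ofReal ε := by
            rw [← ENNReal.ofReal_mul (by positivity : (0:ℝ) ≤ b ^ 2), mul_comm ε (b ^ 2)]
    have hbne : ENNReal.ofReal (b ^ 2) ≠ 0 := by
      simp only [ne_eq, ENNReal.ofReal_eq_zero, not_le]
      positivity
    exact (ENNReal.mul_le_mul_iff_right hbne ENNReal.ofReal_ne_top).1 hchain
  calc P {ω | ∃ t ∈ Set.Icc (0:ℝ) T, c * ρ ≤ |Real.sqrt (Z t ω) - Real.sqrt z|}
      ≤ P S := measure_mono hincl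
    _ ≤ P (⋃ n, G n) := measure_mono hSU
    _ = ⨆ n, P (G n) := hGmono.measure_iUnion
    _ ≤ ENNReal.ofReal ε := iSup_le hPG
end
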